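/- arXiv:1808.10386 — 4 statements merged into one kernel-verified Lean document; each statement's English description precedes it below -/
import Mathlib

section
/- Let u be a smooth axially symmetric solution of the stationary Navier–Stokes system (ASNS), defined on all of ℝ³ and 2π-periodic in z, with u(x) → 0 uniformly as r = |x'| → ∞ and ∫_{−π}^{π}∫₀^∞ |∇u|² r dr dz < ∞. Then ∫_{−π}^{π} u^r(r,z) dz = 0 for every r > 0, and there is an absolute constant C such that ∫_{−π}^{π}∫₀^∞ |u^r(r,z)|² r dr dz ≤ C ∫_{−π}^{π}∫₀^∞ |∇u|² r dr dz; in particular u^r ∈ L²(ℝ²×[−π,π]). -/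
open MeasureTheory Real

/-- `∂_r f` for a function `f = f(r,z)`. -/
noncomputable def pdr (f : ℝ → ℝ → ℝ) (r z : ℝ) : ℝ := deriv (fun s => f s z) r

/-- `∂_z f` for a function `f = f(r,z)`. -/
noncomputable def pdz (f : ℝ → ℝ → ℝ) (r z : ℝ) : ℝ := deriv (fun t => f r t) z

/-- The axially symmetric stationary Navier–Stokes system (ASNS), imposed for all
`r > 0` and all `z ∈ S`. -/
def ASNS (ur uθ uz p : ℝ → ℝ → ℝ) (S : Set ℝ) : Prop :=
  ∀ r : ℝ, 0 < r → ∀ z ∈ S,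
    ((ur r z * pdr ur r z + uz r z * pdz ur r z) - (uθ r z) ^ 2 / r + pdr p r z
        = pdr (pdr ur) r z + (1 / r) * pdr ur r z + pdz (pdz ur) r z - ur r z / r ^ 2)
    ∧ ((ur r z * pdr uθ r z + uz r z * pdz uθ r z) + ur r z * uθ r z / r
        = pdr (pdr uθ) r z + (1 / r) * pdr uθ r z + pdz (pdz uθ) r z - uθ r z / r ^ 2)
    ∧ ((ur r z * pdr uz r z + uz r z * pdz uz r z) + pdz p r z
        = pdr (pdr uz) r z + (1 / r) * pdr uz r z + pdz (pdz uz) r z)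
    ∧ (pdr ur r z + ur r z / r + pdz uz r z = 0)

/-- The Dirichlet integrand `|∇u|²` of an axially symmetric field. -/
noncomputable def dirE (ur uθ uz : ℝ → ℝ → ℝ) (r z : ℝ) : ℝ :=
  (pdr ur r z) ^ 2 + (pdz ur r z) ^ 2 + (pdr uθ r z) ^ 2 + (pdz uθ r z) ^ 2
    + (pdr uz r z) ^ 2 + (pdz uz r z) ^ 2 + ((ur r z) ^ 2 + (uθ r z) ^ 2) / r ^ 2


section aux
variable {f : ℝ → ℝ → ℝ}


lemma aux_hasDerivAt_fst (hf : ContDiff ℝ (⊤ : ℕ∞) (fun q : ℝ × ℝ => f q.1 q.2)) (r z : ℝ) :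
    HasDerivAt (fun s => f s z) (fderiv ℝ (fun q : ℝ × ℝ => f q.1 q.2) (r, z) (1, 0)) r := by
  have hF := (hf.differentiable (by simp) (r, z)).hasFDerivAt
  have hline : HasDerivAt (fun s : ℝ => ((s, z) : ℝ × ℝ)) ((1 : ℝ), (0 : ℝ)) r :=
    (hasDerivAt_id r).prodMk (hasDerivAt_const r z)
  exact hF.comp_hasDerivAt r hline

lemma aux_hasDerivAt_snd (hf : ContDiff ℝ (⊤ : ℕ∞) (fun q : ℝ × ℝ => f q.1 q.2)) (r z : ℝ) :
    HasDerivAt (fun t => f r t) (fderiv ℝ (fun q : ℝ × ℝ => f q.1 q.2) (r, z) (0, 1)) z := by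
  have hF := (hf.differentiable (by simp) (r, z)).hasFDerivAt
  have hline : HasDerivAt (fun t : ℝ => ((r, t) : ℝ × ℝ)) ((0 : ℝ), (1 : ℝ)) z :=
    (hasDerivAt_const z r).prodMk (hasDerivAt_id z)
  exact hF.comp_hasDerivAt z hline

lemma pdr_eq (hf : ContDiff ℝ (⊤ : ℕ∞) (fun q : ℝ × ℝ => f q.1 q.2)) (r z : ℝ) :
    pdr f r z = fderiv ℝ (fun q : ℝ × ℝ => f q.1 q.2) (r, z) (1, 0) :=
  (aux_hasDerivAt_fst hf r z).deriv

lemma pdz_eq (hf : ContDiff ℝ (⊤ : ℕ∞) (fun q : ℝ × ℝ => f q.1 q.2)) (r z : ℝ) :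
    pdz f r z = fderiv ℝ (fun q : ℝ × ℝ => f q.1 q.2) (r, z) (0, 1) :=
  (aux_hasDerivAt_snd hf r z).deriv

lemma cont_pdr (hf : ContDiff ℝ (⊤ : ℕ∞) (fun q : ℝ × ℝ => f q.1 q.2)) : Continuous (fun q : ℝ × ℝ => pdr f q.1 q.2) := by
  have : Continuous fun q : ℝ × ℝ =>
      fderiv ℝ (fun q : ℝ × ℝ => f q.1 q.2) q (1, 0) :=
    (hf.continuous_fderiv (by simp)).clm_apply continuous_const
  exact this.congr fun q => (pdr_eq hf q.1 q.2).symm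

lemma cont_pdz (hf : ContDiff ℝ (⊤ : ℕ∞) (fun q : ℝ × ℝ => f q.1 q.2)) : Continuous (fun q : ℝ × ℝ => pdz f q.1 q.2) := by
  have : Continuous fun q : ℝ × ℝ =>
      fderiv ℝ (fun q : ℝ × ℝ => f q.1 q.2) q (0, 1) :=
    (hf.continuous_fderiv (by simp)).clm_apply continuous_const
  exact this.congr fun q => (pdz_eq hf q.1 q.2).symm

lemma contDiff_slice (hf : ContDiff ℝ (⊤ : ℕ∞) (fun q : ℝ × ℝ => f q.1 q.2)) (r : ℝ) : ContDiff ℝ (⊤ : ℕ∞) (fun t => f r t) :=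
  hf.comp (contDiff_const.prodMk contDiff_id)

lemma cont_f (hf : ContDiff ℝ (⊤ : ℕ∞) (fun q : ℝ × ℝ => f q.1 q.2)) : Continuous (fun q : ℝ × ℝ => f q.1 q.2) := hf.continuous

end aux


lemma exists_zero_of_meanzero (f : ℝ → ℝ) (hc : Continuous f)
    (h0 : (∫ z in (-π)..π, f z) = 0) : ∃ z0 ∈ Set.Icc (-π) π, f z0 = 0 := by
  by_contra h
  push_neg at h
  have hpi : -π < π := by linarith [pi_pos]
  have hIcc : ∀ z ∈ Set.Icc (-π) π, f z ≠ 0 := h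
  have hsign : (∀ z ∈ Set.Icc (-π) π, 0 < f z) ∨ (∀ z ∈ Set.Icc (-π) π, f z < 0) := by
    have hm : (-π : ℝ) ∈ Set.Icc (-π) π := ⟨le_refl _, le_of_lt hpi⟩
    rcases (hIcc _ hm).lt_or_gt with hneg | hpos
    · right
      intro z hz
      by_contra hle
      push_neg at hle
      have hzpos : 0 < f z := lt_of_le_of_ne hle (Ne.symm (hIcc z hz))
      have hsub : Set.uIcc (-π) z ⊆ Set.Icc (-π) π := by
        rw [Set.uIcc_of_le hz.1]
        exact Set.Icc_subset_Icc le_rfl hz.2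
      have : (0:ℝ) ∈ Set.uIcc (f (-π)) (f z) := Set.mem_uIcc.2 (Or.inl ⟨le_of_lt hneg, le_of_lt hzpos⟩)
      obtain ⟨z1, hz1, hfz1⟩ := intermediate_value_uIcc (hc.continuousOn) this
      exact hIcc z1 (hsub hz1) hfz1
    · left
      intro z hz
      by_contra hle
      push_neg at hle
      have hzneg : f z < 0 := lt_of_le_of_ne hle (hIcc z hz)
      have hsub : Set.uIcc (-π) z ⊆ Set.Icc (-π) π := by
        rw [Set.uIcc_of_le hz.1]
        exact Set.Icc_subset_Icc le_rfl hz.2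
      have : (0:ℝ) ∈ Set.uIcc (f (-π)) (f z) := Set.mem_uIcc.2 (Or.inr ⟨le_of_lt hzneg, le_of_lt hpos⟩)
      obtain ⟨z1, hz1, hfz1⟩ := intermediate_value_uIcc (hc.continuousOn) this
      exact hIcc z1 (hsub hz1) hfz1
  rcases hsign with hpos | hneg
  · have : 0 < ∫ z in (-π)..π, f z :=
      intervalIntegral.intervalIntegral_pos_of_pos_on (hc.intervalIntegrable _ _)
        (fun x hx => hpos x ⟨le_of_lt hx.1, le_of_lt hx.2⟩) hpi
    linarith [this, h0.ge]
  · have : 0 < ∫ z in (-π)..π, -f z :=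
      intervalIntegral.intervalIntegral_pos_of_pos_on ((hc.neg).intervalIntegrable _ _)
        (fun x hx => neg_pos.2 (hneg x ⟨le_of_lt hx.1, le_of_lt hx.2⟩)) hpi
    rw [intervalIntegral.integral_neg, h0] at this
    linarith

lemma poincare (f : ℝ → ℝ) (hf : ContDiff ℝ (⊤ : ℕ∞) f)
    (h0 : (∫ z in (-π)..π, f z) = 0) :
    (∫ z in (-π)..π, (f z) ^ 2) ≤ 4 * π ^ 2 * ∫ z in (-π)..π, (deriv f z) ^ 2 := by
  have hpi : -π ≤ π := by linarith [pi_pos]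
  have hc : Continuous f := hf.continuous
  have hc' : Continuous (deriv f) := hf.continuous_deriv (by exact_mod_cast le_top)
  set A := ∫ z in (-π)..π, (deriv f z) ^ 2 with hA
  set M := ∫ z in (-π)..π, |deriv f z| with hM
  have hA0 : 0 ≤ A := intervalIntegral.integral_nonneg hpi (fun u _ => sq_nonneg _)
  have hM0 : 0 ≤ M := intervalIntegral.integral_nonneg hpi (fun u _ => abs_nonneg _)
  obtain ⟨z0, hz0, hfz0⟩ := exists_zero_of_meanzero f hc h0
  -- pointwise bound |f z| ≤ M on Icc
  have key1 : ∀ z ∈ Set.Icc (-π) π, |f z| ≤ M := by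
    intro z hz
    have hftc : (∫ t in z0..z, deriv f t) = f z - f z0 :=
      intervalIntegral.integral_deriv_eq_sub
        (fun x _ => hf.differentiable (by simp) x)
        (hc'.intervalIntegrable _ _)
    have h1 : |f z| = |∫ t in z0..z, deriv f t| := by rw [hftc, hfz0, sub_zero]
    have h2 : |∫ t in z0..z, deriv f t| ≤ |∫ t in z0..z, abs (deriv f t)| := by
      simpa using intervalIntegral.norm_integral_le_abs_integral_norm
        (a := z0) (b := z) (f := deriv f) (μ := volume)
    have h3 : |∫ t in z0..z, abs (deriv f t)| ≤ M := by
      rcases le_total z0 z with hle | hle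
      · have := intervalIntegral.integral_mono_interval (f := fun t => |deriv f t|)
          (μ := volume) hz0.1 hle hz.2
          (Filter.Eventually.of_forall (fun t => abs_nonneg _))
          ((hc'.abs).intervalIntegrable _ _)
        rw [abs_of_nonneg (intervalIntegral.integral_nonneg hle (fun u _ => abs_nonneg _))]
        exact this
      · rw [intervalIntegral.integral_symm, abs_neg]
        have := intervalIntegral.integral_mono_interval (f := fun t => |deriv f t|)
          (μ := volume) hz.1 hle hz0.2
          (Filter.Eventually.of_forall (fun t => abs_nonneg _))
          ((hc'.abs).intervalIntegrable _ _)
        rw [abs_of_nonneg (intervalIntegral.integral_nonneg hle (fun u _ => abs_nonneg _))]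
        exact this
    calc |f z| = _ := h1
      _ ≤ _ := h2
      _ ≤ M := h3
  -- M bound
  have key2 : M ^ 2 ≤ 2 * π * A := by
    have hbound : ∀ t : ℝ, 0 < t → M ≤ (A / t + 2 * π * t) / 2 := by
      intro t ht
      have hpt : ∀ z ∈ Set.Icc (-π) π, |deriv f z| ≤ ((deriv f z) ^ 2 / t + t) / 2 := by
        intro z _
        have h2t : 2 * t * |deriv f z| ≤ (deriv f z) ^ 2 + t ^ 2 := by
          nlinarith [sq_nonneg (|deriv f z| - t), sq_abs (deriv f z)]
        have hle : |deriv f z| ≤ ((deriv f z) ^ 2 + t ^ 2) / (2 * t) := by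
          rw [le_div_iff₀ (by positivity)]; linarith
        calc |deriv f z| ≤ ((deriv f z) ^ 2 + t ^ 2) / (2 * t) := hle
          _ = ((deriv f z) ^ 2 / t + t) / 2 := by field_simp
      have hmono : M ≤ ∫ z in (-π)..π, ((deriv f z) ^ 2 / t + t) / 2 :=
        intervalIntegral.integral_mono_on hpi ((hc'.abs).intervalIntegrable _ _)
          ((((hc'.pow 2).div_const t).add continuous_const).div_const 2 |>.intervalIntegrable _ _) hpt
      calc M ≤ ∫ z in (-π)..π, ((deriv f z) ^ 2 / t + t) / 2 := hmono
        _ = (A / t + 2 * π * t) / 2 := by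
            rw [intervalIntegral.integral_div]
            congr 1
            rw [intervalIntegral.integral_add (f := fun x => deriv f x ^ 2 / t) (((hc'.pow 2).div_const t).intervalIntegrable _ _)
              (intervalIntegrable_const), intervalIntegral.integral_div,
              intervalIntegral.integral_const]
            rw [← hA, smul_eq_mul]
            ring
    rcases eq_or_lt_of_le hA0 with hA0' | hApos
    · have : ∀ t : ℝ, 0 < t → M ≤ π * t := by
        intro t ht
        have := hbound t ht
        rw [← hA0'] at this
        calc M ≤ (0 / t + 2 * π * t) / 2 := this
          _ = π * t := by ring
      have hM_le : M ≤ 0 := by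
        by_contra hMpos
        push_neg at hMpos
        have hb := this (M / (2 * π)) (by positivity)
        have hπ : (π:ℝ) ≠ 0 := pi_ne_zero
        have hsimp : π * (M / (2 * π)) = M / 2 := by field_simp
        rw [hsimp] at hb
        linarith
      have : M = 0 := le_antisymm hM_le hM0
      rw [this, ← hA0']
      norm_num
    · set t := Real.sqrt (A / (2 * π)) with htdef
      have ht : 0 < t := Real.sqrt_pos.2 (by positivity)
      have ht2 : t ^ 2 = A / (2 * π) := Real.sq_sqrt (by positivity)
      have := hbound t ht
      have hbnd : M ≤ 2 * π * t := by
        have hAeq : A = 2 * π * t ^ 2 := by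
          rw [ht2]; field_simp
        calc M ≤ (A / t + 2 * π * t) / 2 := this
          _ = 2 * π * t := by rw [hAeq]; field_simp; ring
      calc M ^ 2 ≤ (2 * π * t) ^ 2 := by nlinarith
        _ = 4 * π ^ 2 * t ^ 2 := by ring
        _ = 4 * π ^ 2 * (A / (2 * π)) := by rw [ht2]
        _ = 2 * π * A := by field_simp; ring
  -- conclude
  have key3 : ∀ z ∈ Set.Icc (-π) π, (f z) ^ 2 ≤ 2 * π * A := by
    intro z hz
    calc (f z) ^ 2 = |f z| ^ 2 := (sq_abs _).symm
      _ ≤ M ^ 2 := by nlinarith [key1 z hz, abs_nonneg (f z)]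
      _ ≤ 2 * π * A := key2
  calc (∫ z in (-π)..π, (f z) ^ 2) ≤ ∫ _z in (-π)..π, 2 * π * A :=
        intervalIntegral.integral_mono_on hpi ((hc.pow 2).intervalIntegrable _ _)
          intervalIntegrable_const key3
    _ = 4 * π ^ 2 * A := by rw [intervalIntegral.integral_const]; ring_nf


lemma mean_zero (ur uz : ℝ → ℝ → ℝ)
    (hur : ContDiff ℝ (⊤ : ℕ∞) (fun q : ℝ × ℝ => ur q.1 q.2))
    (huz : ContDiff ℝ (⊤ : ℕ∞) (fun q : ℝ × ℝ => uz q.1 q.2))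
    (hper : ∀ r z : ℝ, uz r (z + 2 * π) = uz r z)
    (hdiv : ∀ r : ℝ, 0 < r → ∀ z : ℝ, pdr ur r z + ur r z / r + pdz uz r z = 0) :
    ∀ r : ℝ, 0 < r → (∫ z in (-π)..π, ur r z) = 0 := by
  have hpi : -π ≤ π := by linarith [pi_pos]
  set G : ℝ → ℝ := fun r => ∫ z in (-π)..π, r * ur r z with hGdef
  -- the slice derivative with value pdr
  have hslice : ∀ x t : ℝ, HasDerivAt (fun s => ur s t) (pdr ur x t) x := by
    intro x t
    rw [pdr_eq hur]
    exact aux_hasDerivAt_fst hur x t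
  -- G has derivative 0 at every r0 > 0
  have hG' : ∀ r0 : ℝ, 0 < r0 → HasDerivAt G 0 r0 := by
    intro r0 hr0
    set F' : ℝ → ℝ → ℝ := fun x t => ur x t + x * pdr ur x t with hF'def
    -- bound on compact set
    have hKc : IsCompact (Set.Icc (r0 - r0/2) (r0 + r0/2) ×ˢ Set.Icc (-π) π) :=
      (isCompact_Icc).prod isCompact_Icc
    have hgc : Continuous (fun q : ℝ × ℝ => ur q.1 q.2 + q.1 * pdr ur q.1 q.2) :=
      (cont_f hur).add (continuous_fst.mul (cont_pdr hur))
    obtain ⟨Cb, hCb⟩ := hKc.exists_bound_of_continuousOn hgc.continuousOn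
    have hcont1 : Continuous fun t : ℝ => r0 * ur r0 t :=
      continuous_const.mul ((cont_f hur).comp (Continuous.prodMk_right r0))
    have hcont2 : Continuous fun t : ℝ => ur r0 t + r0 * pdr ur r0 t :=
      ((cont_f hur).comp (Continuous.prodMk_right r0)).add
        (continuous_const.mul ((cont_pdr hur).comp (Continuous.prodMk_right r0)))
    have hmeas1 : ∀ x : ℝ, Continuous fun t : ℝ => x * ur x t := fun x =>
      continuous_const.mul ((cont_f hur).comp (Continuous.prodMk_right x))
    have key := intervalIntegral.hasDerivAt_integral_of_dominated_loc_of_deriv_le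
      (F := fun x t => x * ur x t) (F' := F') (x₀ := r0) (a := -π) (b := π)
      (bound := fun _ => Cb) (s := Metric.ball r0 (r0/2)) (μ := volume)
      (Metric.ball_mem_nhds _ (by positivity))
      (Filter.Eventually.of_forall (fun x => (hmeas1 x).aestronglyMeasurable))
      (hcont1.intervalIntegrable _ _)
      (hcont2.aestronglyMeasurable)
      (Filter.Eventually.of_forall (fun t ht x hx => by
        have hxK : (x, t) ∈ Set.Icc (r0 - r0/2) (r0 + r0/2) ×ˢ Set.Icc (-π) π := by
          constructor
          · have := Metric.mem_ball.1 hx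
            rw [Real.dist_eq] at this
            constructor <;> [linarith [abs_lt.1 this |>.1]; linarith [abs_lt.1 this |>.2]]
          · have htI : t ∈ Set.Ioc (-π) π := by rwa [Set.uIoc_of_le hpi] at ht
            exact ⟨le_of_lt htI.1, htI.2⟩
        simpa using hCb _ hxK))
      (intervalIntegrable_const)
      (Filter.Eventually.of_forall (fun t _ x _ => by
        have := (hasDerivAt_id' x).fun_mul (hslice x t)
        simpa [F'] using this))
    obtain ⟨_, hG'0⟩ := key
    -- the derivative integral vanishes
    have hval : (∫ t in (-π)..π, F' r0 t) = 0 := by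
      have hrw : ∀ t : ℝ, F' r0 t = -r0 * pdz uz r0 t := by
        intro t
        have h := hdiv r0 hr0 t
        have : pdr ur r0 t * r0 + ur r0 t + pdz uz r0 t * r0 = 0 := by
          field_simp at h
          linarith [h]
        simp only [hF'def]
        nlinarith [this]
      rw [intervalIntegral.integral_congr (g := fun t => -r0 * pdz uz r0 t)
        (fun t _ => hrw t), intervalIntegral.integral_const_mul]
      have hfc : (∫ t in (-π)..π, pdz uz r0 t) = uz r0 π - uz r0 (-π) := by
        have : (∫ t in (-π)..π, pdz uz r0 t) = ∫ t in (-π)..π, deriv (fun s => uz r0 s) t := rfl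
        rw [this]
        exact intervalIntegral.integral_deriv_eq_sub
          (fun x _ => (contDiff_slice huz r0).differentiable (by simp) x)
          (((contDiff_slice huz r0).continuous_deriv (by exact_mod_cast le_top)).intervalIntegrable _ _)
      rw [hfc]
      have : uz r0 π = uz r0 (-π) := by
        have := hper r0 (-π)
        rw [show -π + 2 * π = π by ring] at this
        exact this
      rw [this]
      ring
    rw [hval] at hG'0
    exact hG'0
  -- G is constant on (0, ∞): G b = G a for 0 < a ≤ b
  have hconst : ∀ a b : ℝ, 0 < a → a ≤ b → G b = G a := by
    intro a b ha hab
    have hcont : ContinuousOn G (Set.Icc a b) := fun x hx =>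
      ((hG' x (lt_of_lt_of_le ha hx.1)).continuousAt).continuousWithinAt
    exact constant_of_has_deriv_right_zero hcont
      (fun x hx => ((hG' x (lt_of_lt_of_le ha hx.1)).hasDerivWithinAt)) b
      ⟨hab, le_refl b⟩
  -- bound near 0
  obtain ⟨M0, hM0⟩ := ((isCompact_Icc (a := (0:ℝ)) (b := 1)).prod
    (isCompact_Icc (a := -π) (b := π))).exists_bound_of_continuousOn (cont_f hur).continuousOn
  have hM0' : 0 ≤ M0 := le_trans (norm_nonneg _) (hM0 (0, 0)
    (by refine ⟨⟨le_refl _, zero_le_one⟩, ⟨?_, ?_⟩⟩ <;> simp <;> linarith [pi_pos]))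
  have hGsmall : ∀ s : ℝ, 0 < s → s ≤ 1 → |G s| ≤ 2 * π * M0 * s := by
    intro s hs hs1
    have hb : ∀ z ∈ Set.Icc (-π) π, |s * ur s z| ≤ s * M0 := by
      intro z hz
      rw [abs_mul, abs_of_pos hs]
      exact mul_le_mul_of_nonneg_left (hM0 (s, z) ⟨⟨le_of_lt hs, hs1⟩, hz⟩) (le_of_lt hs)
    calc |G s| ≤ ∫ z in (-π)..π, |s * ur s z| :=
          intervalIntegral.abs_integral_le_integral_abs hpi
      _ ≤ ∫ _z in (-π)..π, s * M0 :=
          intervalIntegral.integral_mono_on hpi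
            (((continuous_const.mul ((cont_f hur).comp (Continuous.prodMk_right s))).abs).intervalIntegrable _ _)
            intervalIntegrable_const hb
      _ = 2 * π * M0 * s := by rw [intervalIntegral.integral_const, smul_eq_mul]; ring
  -- conclude G r = 0 for r > 0
  have hGzero : ∀ r : ℝ, 0 < r → G r = 0 := by
    intro r hr
    by_contra hne
    have habs : 0 < |G r| := abs_pos.2 hne
    set s : ℝ := min (min 1 r) (|G r| / (2 * (2 * π * M0 + 1))) with hsdef
    have hspos : 0 < s := lt_min (lt_min one_pos hr) (by positivity)
    have hs1 : s ≤ 1 := le_trans (min_le_left _ _) (min_le_left _ _)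
    have hsr : s ≤ r := le_trans (min_le_left _ _) (min_le_right _ _)
    have heq : G r = G s := hconst s r hspos hsr
    have hsmall := hGsmall s hspos hs1
    have hsle : s ≤ |G r| / (2 * (2 * π * M0 + 1)) := min_le_right _ _
    have : |G r| ≤ 2 * π * M0 * s := by rw [heq]; exact hsmall
    have h2 : 2 * π * M0 * s ≤ (2 * π * M0 + 1) * (|G r| / (2 * (2 * π * M0 + 1))) := by
      apply mul_le_mul (by linarith) hsle (le_of_lt hspos) (by positivity)
    have h3 : (2 * π * M0 + 1) * (|G r| / (2 * (2 * π * M0 + 1))) = |G r| / 2 := by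
      field_simp
    linarith
  intro r hr
  have h1 : G r = r * ∫ z in (-π)..π, ur r z := intervalIntegral.integral_const_mul r _
  have h2 := hGzero r hr
  rw [h1] at h2
  exact (mul_eq_zero.1 h2).resolve_left (ne_of_gt hr)


/-- For a smooth axially symmetric, `2π`-periodic-in-`z` D-solution of
ASNS on `ℝ³` with uniform decay and finite Dirichlet integral, `u^r` has zero mean in `z`
and its weighted `L²` norm is controlled by the Dirichlet integral with an absolute
constant; in particular `u^r ∈ L²(ℝ² × [−π,π])`. -/
theorem radial_component_mean_zero_and_L2 :
    ∃ C : ℝ, 0 < C ∧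
      ∀ ur uθ uz p : ℝ → ℝ → ℝ,
        ContDiff ℝ (⊤ : ℕ∞) (fun q : ℝ × ℝ => ur q.1 q.2) →
        ContDiff ℝ (⊤ : ℕ∞) (fun q : ℝ × ℝ => uθ q.1 q.2) →
        ContDiff ℝ (⊤ : ℕ∞) (fun q : ℝ × ℝ => uz q.1 q.2) →
        ContDiff ℝ (⊤ : ℕ∞) (fun q : ℝ × ℝ => p q.1 q.2) →
        (∀ r z : ℝ, ur r (z + 2 * π) = ur r z ∧ uθ r (z + 2 * π) = uθ r z
          ∧ uz r (z + 2 * π) = uz r z ∧ p r (z + 2 * π) = p r z) →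
        ASNS ur uθ uz p Set.univ →
        (∀ ε : ℝ, 0 < ε → ∃ R : ℝ, ∀ r : ℝ, R ≤ r → ∀ z : ℝ,
          |ur r z| + |uθ r z| + |uz r z| < ε) →
        (∫⁻ q in Set.Ioi (0:ℝ) ×ˢ Set.Icc (-π) π,
          ENNReal.ofReal (dirE ur uθ uz q.1 q.2 * q.1) < ⊤) →
        (∀ r : ℝ, 0 < r → (∫ z in (-π)..π, ur r z) = 0) ∧
          (∫⁻ q in Set.Ioi (0:ℝ) ×ˢ Set.Icc (-π) π,
              ENNReal.ofReal ((ur q.1 q.2) ^ 2 * q.1)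
            ≤ ENNReal.ofReal C * ∫⁻ q in Set.Ioi (0:ℝ) ×ˢ Set.Icc (-π) π,
              ENNReal.ofReal (dirE ur uθ uz q.1 q.2 * q.1)) ∧
          IntegrableOn (fun q : ℝ × ℝ => (ur q.1 q.2) ^ 2 * q.1)
            (Set.Ioi (0:ℝ) ×ˢ Set.Icc (-π) π) := by
  refine ⟨4 * π ^ 2, by positivity, ?_⟩
  intro ur uθ uz p hur huθ huz hp hper hASNS hdecay hfin
  have hpi : -π ≤ π := by linarith [pi_pos]
  have hdiv : ∀ r : ℝ, 0 < r → ∀ z : ℝ, pdr ur r z + ur r z / r + pdz uz r z = 0 :=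
    fun r hr z => (hASNS r hr z (Set.mem_univ z)).2.2.2
  have hmz : ∀ r : ℝ, 0 < r → (∫ z in (-π)..π, ur r z) = 0 :=
    mean_zero ur uz hur huz (fun r z => (hper r z).2.2.1) hdiv
  set S : Set (ℝ × ℝ) := Set.Ioi (0:ℝ) ×ˢ Set.Icc (-π) π with hSdef
  have hSmeas : MeasurableSet S := measurableSet_Ioi.prod measurableSet_Icc
  -- continuity facts
  have hcur : Continuous (fun q : ℝ × ℝ => ur q.1 q.2) := cont_f hur
  have hg1c : Continuous (fun q : ℝ × ℝ => (ur q.1 q.2) ^ 2 * q.1) :=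
    (hcur.pow 2).mul continuous_fst
  -- measurability of the dirE integrand
  have hdirEm : Measurable (fun q : ℝ × ℝ => dirE ur uθ uz q.1 q.2) := by
    unfold dirE
    exact ((((((((cont_pdr hur).pow 2).measurable.add
      ((cont_pdz hur).pow 2).measurable).add
      ((cont_pdr huθ).pow 2).measurable).add
      ((cont_pdz huθ).pow 2).measurable).add
      ((cont_pdr huz).pow 2).measurable).add
      ((cont_pdz huz).pow 2).measurable)).add
      ((((hcur.pow 2).measurable).add (((cont_f huθ).pow 2).measurable)).div
        ((continuous_fst.pow 2).measurable))
  have hg2m : Measurable (fun q : ℝ × ℝ => ENNReal.ofReal (dirE ur uθ uz q.1 q.2 * q.1)) :=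
    (hdirEm.mul measurable_fst).ennreal_ofReal
  have hg1m : Measurable (fun q : ℝ × ℝ => ENNReal.ofReal ((ur q.1 q.2) ^ 2 * q.1)) :=
    hg1c.measurable.ennreal_ofReal
  -- per-slice real inequality
  have hslice : ∀ r : ℝ, 0 < r →
      (∫ z in (-π)..π, (ur r z) ^ 2) ≤ 4 * π ^ 2 * ∫ z in (-π)..π, dirE ur uθ uz r z := by
    intro r hr
    have h1 := poincare (fun z => ur r z) (contDiff_slice hur r) (hmz r hr)
    have h2 : (∫ z in (-π)..π, (deriv (fun z => ur r z) z) ^ 2)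
        ≤ ∫ z in (-π)..π, dirE ur uθ uz r z := by
      apply intervalIntegral.integral_mono_on hpi
      · exact (((contDiff_slice hur r).continuous_deriv
          (by exact_mod_cast le_top)).pow 2).intervalIntegrable _ _
      · -- dirE r · is continuous in z
        have : Continuous (fun z => dirE ur uθ uz r z) := by
          unfold dirE
          apply Continuous.add
          apply Continuous.add
          apply Continuous.add
          apply Continuous.add
          apply Continuous.add
          · exact (((cont_pdr hur).comp (Continuous.prodMk_right r)).pow 2).add
              (((cont_pdz hur).comp (Continuous.prodMk_right r)).pow 2)
          · exact ((cont_pdr huθ).comp (Continuous.prodMk_right r)).pow 2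
          · exact ((cont_pdz huθ).comp (Continuous.prodMk_right r)).pow 2
          · exact ((cont_pdr huz).comp (Continuous.prodMk_right r)).pow 2
          · exact ((cont_pdz huz).comp (Continuous.prodMk_right r)).pow 2
          · exact ((((cont_f hur).comp (Continuous.prodMk_right r)).pow 2).add
              (((cont_f huθ).comp (Continuous.prodMk_right r)).pow 2)).div_const _
        exact this.intervalIntegrable _ _
      · intro z _
        have hlast : 0 ≤ ((ur r z) ^ 2 + (uθ r z) ^ 2) / r ^ 2 := by positivity
        have : deriv (fun z => ur r z) z = pdz ur r z := rfl
        rw [this]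
        unfold dirE
        nlinarith [sq_nonneg (pdr ur r z), sq_nonneg (pdr uθ r z), sq_nonneg (pdz uθ r z),
          sq_nonneg (pdr uz r z), sq_nonneg (pdz uz r z)]
    calc (∫ z in (-π)..π, (ur r z) ^ 2) ≤ _ := h1
      _ ≤ 4 * π ^ 2 * ∫ z in (-π)..π, dirE ur uθ uz r z := by
        apply mul_le_mul_of_nonneg_left h2 (by positivity)
  -- slice lintegral identities
  have hId1 : ∀ r : ℝ, 0 < r →
      (∫⁻ z in Set.Icc (-π) π, ENNReal.ofReal ((ur r z) ^ 2 * r))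
        = ENNReal.ofReal ((∫ z in (-π)..π, (ur r z) ^ 2) * r) := by
    intro r hr
    have hint : IntegrableOn (fun z => (ur r z) ^ 2 * r) (Set.Icc (-π) π) :=
      ((((cont_f hur).comp (Continuous.prodMk_right r)).pow 2).mul continuous_const).integrableOn_Icc
    rw [← ofReal_integral_eq_lintegral_ofReal hint
      (ae_of_all _ (fun z => by positivity))]
    congr 1
    rw [MeasureTheory.integral_Icc_eq_integral_Ioc,
      ← intervalIntegral.integral_of_le hpi, intervalIntegral.integral_mul_const]
  have hId2 : ∀ r : ℝ, 0 < r →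
      (∫⁻ z in Set.Icc (-π) π, ENNReal.ofReal (dirE ur uθ uz r z * r))
        = ENNReal.ofReal ((∫ z in (-π)..π, dirE ur uθ uz r z) * r) := by
    intro r hr
    have hcontd : Continuous (fun z => dirE ur uθ uz r z) := by
      unfold dirE
      apply Continuous.add
      apply Continuous.add
      apply Continuous.add
      apply Continuous.add
      apply Continuous.add
      · exact (((cont_pdr hur).comp (Continuous.prodMk_right r)).pow 2).add
          (((cont_pdz hur).comp (Continuous.prodMk_right r)).pow 2)
      · exact ((cont_pdr huθ).comp (Continuous.prodMk_right r)).pow 2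
      · exact ((cont_pdz huθ).comp (Continuous.prodMk_right r)).pow 2
      · exact ((cont_pdr huz).comp (Continuous.prodMk_right r)).pow 2
      · exact ((cont_pdz huz).comp (Continuous.prodMk_right r)).pow 2
      · exact ((((cont_f hur).comp (Continuous.prodMk_right r)).pow 2).add
          (((cont_f huθ).comp (Continuous.prodMk_right r)).pow 2)).div_const _
    have hdnn : ∀ z : ℝ, 0 ≤ dirE ur uθ uz r z := by
      intro z
      unfold dirE
      positivity
    have hint : IntegrableOn (fun z => dirE ur uθ uz r z * r) (Set.Icc (-π) π) :=
      (hcontd.mul continuous_const).integrableOn_Icc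
    rw [← ofReal_integral_eq_lintegral_ofReal hint
      (ae_of_all _ (fun z => mul_nonneg (hdnn z) (le_of_lt hr)))]
    congr 1
    rw [MeasureTheory.integral_Icc_eq_integral_Ioc,
      ← intervalIntegral.integral_of_le hpi, intervalIntegral.integral_mul_const]
  -- product decomposition
  have hprod1 : (∫⁻ q in S, ENNReal.ofReal ((ur q.1 q.2) ^ 2 * q.1))
      = ∫⁻ r in Set.Ioi (0:ℝ), ∫⁻ z in Set.Icc (-π) π,
          ENNReal.ofReal ((ur r z) ^ 2 * r) := by
    rw [hSdef, Measure.volume_eq_prod, ← Measure.prod_restrict]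
    exact MeasureTheory.lintegral_prod _ hg1m.aemeasurable
  have hprod2 : (∫⁻ q in S, ENNReal.ofReal (dirE ur uθ uz q.1 q.2 * q.1))
      = ∫⁻ r in Set.Ioi (0:ℝ), ∫⁻ z in Set.Icc (-π) π,
          ENNReal.ofReal (dirE ur uθ uz r z * r) := by
    rw [hSdef, Measure.volume_eq_prod, ← Measure.prod_restrict]
    exact MeasureTheory.lintegral_prod _ hg2m.aemeasurable
  -- the main inequality
  have hmain : (∫⁻ q in S, ENNReal.ofReal ((ur q.1 q.2) ^ 2 * q.1))
      ≤ ENNReal.ofReal (4 * π ^ 2) * ∫⁻ q in S,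
          ENNReal.ofReal (dirE ur uθ uz q.1 q.2 * q.1) := by
    rw [hprod1, hprod2, ← MeasureTheory.lintegral_const_mul' _ _ ENNReal.ofReal_ne_top]
    apply lintegral_mono_ae
    rw [ae_restrict_iff' measurableSet_Ioi]
    refine ae_of_all _ (fun r hr => ?_)
    have hr' : 0 < r := hr
    rw [hId1 r hr', hId2 r hr', ← ENNReal.ofReal_mul (by positivity)]
    apply ENNReal.ofReal_le_ofReal
    calc (∫ z in (-π)..π, (ur r z) ^ 2) * r
        ≤ (4 * π ^ 2 * ∫ z in (-π)..π, dirE ur uθ uz r z) * r :=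
          mul_le_mul_of_nonneg_right (hslice r hr') (le_of_lt hr')
      _ = 4 * π ^ 2 * ((∫ z in (-π)..π, dirE ur uθ uz r z) * r) := by ring
  refine ⟨hmz, hmain, ?_⟩
  -- integrability
  constructor
  · exact (hg1c.aestronglyMeasurable).restrict
  · have hnn : 0 ≤ᶠ[ae (volume.restrict S)] (fun q : ℝ × ℝ => (ur q.1 q.2) ^ 2 * q.1) := by
      rw [Filter.EventuallyLE, ae_restrict_iff' hSmeas]
      refine ae_of_all _ (fun q hq => ?_)
      have hq1 : 0 < q.1 := hq.1
      positivity
    rw [hasFiniteIntegral_iff_ofReal hnn]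
    exact lt_of_le_of_lt hmain (ENNReal.mul_lt_top ENNReal.ofReal_lt_top hfin)
end

section
/- There is an absolute constant c > 0 such that for all x = (x', x₃) and y = (y', y₃) in ℝ²×[0,1] with x' ≠ y', the Green function satisfies |G(x,y)| ≤ c / ( |x'−y'|(1 + |x'−y'|) + |x₃−y₃| ). -/
open Real

set_option maxHeartbeats 1000000

/-- The general term of the series defining the Green function of the Laplacian on
`ℝ² × [0,1]` with Dirichlet boundary conditions; `d = |x' − y'|`. -/
noncomputable def greenTerm (d x3 y3 : ℝ) (n : ℤ) : ℝ :=
  1 / Real.sqrt (d ^ 2 + (x3 - y3 + 2 * (n : ℝ)) ^ 2)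
    - 1 / Real.sqrt (d ^ 2 + (x3 + y3 - 2 * (n : ℝ)) ^ 2)

/-- The Green function of the Laplacian on `ℝ² × [0,1]` with Dirichlet boundary
conditions. -/
noncomputable def greenG (x' : EuclideanSpace ℝ (Fin 2)) (x3 : ℝ)
    (y' : EuclideanSpace ℝ (Fin 2)) (y3 : ℝ) : ℝ :=
  (1 / (4 * π)) * ∑' n : ℤ, greenTerm (‖x' - y'‖) x3 y3 n


lemma S_pos {d t : ℝ} (hd : 0 < d) : 0 < Real.sqrt (d^2 + t^2) :=
  Real.sqrt_pos.2 (by positivity)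

lemma S_sq {d t : ℝ} : Real.sqrt (d^2 + t^2) ^ 2 = d^2 + t^2 :=
  Real.sq_sqrt (by positivity)

lemma S_ge_d {d t : ℝ} (hd : 0 ≤ d) : d ≤ Real.sqrt (d^2 + t^2) := by
  nlinarith [S_sq (d := d) (t := t), Real.sqrt_nonneg (d^2 + t^2), sq_nonneg t,
    sq_nonneg (Real.sqrt (d^2+t^2) - d)]

lemma S_ge_abs {d t : ℝ} : |t| ≤ Real.sqrt (d^2 + t^2) := by
  nlinarith [S_sq (d := d) (t := t), Real.sqrt_nonneg (d^2 + t^2), sq_nonneg d,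
    sq_nonneg (Real.sqrt (d^2+t^2) - |t|), sq_abs t, abs_nonneg t]

lemma S_le {d t : ℝ} (hd : 0 ≤ d) : Real.sqrt (d^2 + t^2) ≤ d + |t| := by
  nlinarith [S_sq (d := d) (t := t), Real.sqrt_nonneg (d^2 + t^2), sq_abs t, abs_nonneg t,
    sq_nonneg (Real.sqrt (d^2+t^2) - d - |t|)]

lemma S_mono {d s t : ℝ} (h : |s| ≤ |t|) :
    Real.sqrt (d^2 + s^2) ≤ Real.sqrt (d^2 + t^2) := by
  apply Real.sqrt_le_sqrt
  nlinarith [sq_abs s, sq_abs t, abs_nonneg s]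

lemma diff_eq {d s t : ℝ} (hd : 0 < d) :
    1 / Real.sqrt (d^2 + s^2) - 1 / Real.sqrt (d^2 + t^2)
      = (t^2 - s^2) / (Real.sqrt (d^2 + s^2) * Real.sqrt (d^2 + t^2)
          * (Real.sqrt (d^2 + s^2) + Real.sqrt (d^2 + t^2))) := by
  set A := Real.sqrt (d^2 + s^2) with hA'
  set B := Real.sqrt (d^2 + t^2) with hB'
  have hA := S_pos (t := s) hd
  have hB := S_pos (t := t) hd
  have hA2 : A^2 = d^2 + s^2 := S_sq
  have hB2 : B^2 = d^2 + t^2 := S_sq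
  have key : t^2 - s^2 = (B - A) * (A + B) := by nlinarith
  rw [key]
  rw [show A * B * (A + B) = (A * B) * (A + B) by ring,
    mul_div_mul_right _ _ (by positivity : (0:ℝ) < A + B).ne']
  rw [div_sub_div _ _ hA.ne' hB.ne']
  ring_nf
  simp only [hA', hB']

lemma pair_bound {d x3 y3 n : ℝ} (hd : 0 < d) (hx0 : 0 ≤ x3) (hx1 : x3 ≤ 1)
    (hy0 : 0 ≤ y3) (hy1 : y3 ≤ 1) (hn : 2 ≤ n) :
    |(1/Real.sqrt (d^2+(x3-y3+2*n)^2) - 1/Real.sqrt (d^2+(x3+y3-2*n)^2))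
      + (1/Real.sqrt (d^2+(x3-y3+2*(-n))^2) - 1/Real.sqrt (d^2+(x3+y3-2*(-n))^2))|
      ≤ 6656 / (d+n)^3 := by
  set s1 := x3 - y3 + 2*n with hs1
  set t1 := x3 + y3 - 2*n with ht1
  set s2 := x3 - y3 + 2*(-n) with hs2
  set t2 := x3 + y3 - 2*(-n) with ht2
  set A1 := Real.sqrt (d^2 + s1^2) with hA1
  set B1 := Real.sqrt (d^2 + t1^2) with hB1
  set A2 := Real.sqrt (d^2 + s2^2) with hA2
  set B2 := Real.sqrt (d^2 + t2^2) with hB2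
  set M := max d n with hM'
  have hMd : d ≤ M := le_max_left _ _
  have hMn : n ≤ M := le_max_right _ _
  have hM : 0 < M := lt_of_lt_of_le hd hMd
  -- lower bounds on the four square roots
  have habs1 : n ≤ |s1| := by rw [abs_of_pos (by simp only [hs1]; linarith)]; simp only [hs1]; linarith
  have habs2 : n ≤ |t1| := by rw [abs_of_nonpos (by simp only [ht1]; linarith)]; simp only [ht1]; linarith
  have habs3 : n ≤ |s2| := by rw [abs_of_nonpos (by simp only [hs2]; linarith)]; simp only [hs2]; linarith
  have habs4 : n ≤ |t2| := by rw [abs_of_pos (by simp only [ht2]; linarith)]; simp only [ht2]; linarith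
  have habs1' : |s1| ≤ 3*n := by rw [abs_of_pos (by simp only [hs1]; linarith)]; simp only [hs1]; linarith
  have habs2' : |t1| ≤ 3*n := by rw [abs_of_nonpos (by simp only [ht1]; linarith)]; simp only [ht1]; linarith
  have habs3' : |s2| ≤ 3*n := by rw [abs_of_nonpos (by simp only [hs2]; linarith)]; simp only [hs2]; linarith
  have habs4' : |t2| ≤ 3*n := by rw [abs_of_pos (by simp only [ht2]; linarith)]; simp only [ht2]; linarith
  have hA1lo : M ≤ A1 := max_le (S_ge_d hd.le) (le_trans habs1 S_ge_abs)
  have hB1lo : M ≤ B1 := max_le (S_ge_d hd.le) (le_trans habs2 S_ge_abs)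
  have hA2lo : M ≤ A2 := max_le (S_ge_d hd.le) (le_trans habs3 S_ge_abs)
  have hB2lo : M ≤ B2 := max_le (S_ge_d hd.le) (le_trans habs4 S_ge_abs)
  have hA1hi : A1 ≤ 4*M := le_trans (S_le hd.le) (by linarith)
  have hB1hi : B1 ≤ 4*M := le_trans (S_le hd.le) (by linarith)
  have hA2hi : A2 ≤ 4*M := le_trans (S_le hd.le) (by linarith)
  have hB2hi : B2 ≤ 4*M := le_trans (S_le hd.le) (by linarith)
  set E1 := A1 * B1 * (A1 + B1) with hE1'
  set E2 := A2 * B2 * (A2 + B2) with hE2'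
  have hA1p : 0 < A1 := lt_of_lt_of_le hM hA1lo
  have hB1p : 0 < B1 := lt_of_lt_of_le hM hB1lo
  have hA2p : 0 < A2 := lt_of_lt_of_le hM hA2lo
  have hB2p : 0 < B2 := lt_of_lt_of_le hM hB2lo
  have hE1pos : 0 < E1 := by positivity
  have hE2pos : 0 < E2 := by positivity
  have hMM1 : M * M ≤ A1 * B1 := mul_le_mul hA1lo hB1lo hM.le hA1p.le
  have hMM2 : M * M ≤ A2 * B2 := mul_le_mul hA2lo hB2lo hM.le hA2p.le
  have hE1lo : 2*M^3 ≤ E1 := by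
    have := mul_le_mul hMM1 (by linarith : 2*M ≤ A1 + B1) (by positivity)
      (by positivity : (0:ℝ) ≤ A1 * B1)
    calc 2*M^3 = M * M * (2*M) := by ring
      _ ≤ A1 * B1 * (A1 + B1) := this
  have hE2lo : 2*M^3 ≤ E2 := by
    have := mul_le_mul hMM2 (by linarith : 2*M ≤ A2 + B2) (by positivity)
      (by positivity : (0:ℝ) ≤ A2 * B2)
    calc 2*M^3 = M * M * (2*M) := by ring
      _ ≤ A2 * B2 * (A2 + B2) := this
  have hE1hi : E1 ≤ 128*M^3 := by
    have h12 : A1 * B1 ≤ (4*M) * (4*M) := mul_le_mul hA1hi hB1hi hB1p.le (by positivity)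
    have := mul_le_mul h12 (by linarith : A1 + B1 ≤ 8*M) (by positivity) (by positivity)
    calc E1 ≤ (4*M) * (4*M) * (8*M) := this
      _ = 128*M^3 := by ring
  have hE2hi : E2 ≤ 128*M^3 := by
    have h12 : A2 * B2 ≤ (4*M) * (4*M) := mul_le_mul hA2hi hB2hi hB2p.le (by positivity)
    have := mul_le_mul h12 (by linarith : A2 + B2 ≤ 8*M) (by positivity) (by positivity)
    calc E2 ≤ (4*M) * (4*M) * (8*M) := this
      _ = 128*M^3 := by ring
  have hA1sq : A1^2 = d^2 + s1^2 := S_sq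
  have hB1sq : B1^2 = d^2 + t1^2 := S_sq
  have hA2sq : A2^2 = d^2 + s2^2 := S_sq
  have hB2sq : B2^2 = d^2 + t2^2 := S_sq
  have hAA : (A1 - A2) * (A1 + A2) = 8*n*(x3 - y3) := by
    have h : (A1 - A2) * (A1 + A2) = A1^2 - A2^2 := by ring
    rw [h, hA1sq, hA2sq, hs1, hs2]; ring
  have hBB : (B1 - B2) * (B1 + B2) = -(8*n*(x3 + y3)) := by
    have h : (B1 - B2) * (B1 + B2) = B1^2 - B2^2 := by ring
    rw [h, hB1sq, hB2sq, ht1, ht2]; ring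
  have h2 : |(A1 - A2)*(A1+A2)| ≤ 8*n := by
    rw [hAA, abs_mul, abs_of_pos (by linarith : (0:ℝ) < 8*n)]
    have hxy : |x3 - y3| ≤ 1 := abs_le.2 ⟨by linarith, by linarith⟩
    have := mul_le_mul_of_nonneg_left hxy (by linarith : (0:ℝ) ≤ 8*n)
    linarith
  have h3 : |(B1 - B2)*(B1+B2)| ≤ 16*n := by
    rw [hBB, abs_neg, abs_mul, abs_of_pos (by linarith : (0:ℝ) < 8*n),
      abs_of_nonneg (by linarith : (0:ℝ) ≤ x3 + y3)]
    have := mul_le_mul_of_nonneg_right (by linarith : x3 + y3 ≤ 2) (by linarith : (0:ℝ) ≤ 8*n)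
    linarith
  have hAd : |A1 - A2| * M ≤ 4*n := by
    have h1 : |A1 - A2| * (2*M) ≤ |A1 - A2| * (A1 + A2) :=
      mul_le_mul_of_nonneg_left (by linarith) (abs_nonneg _)
    have h2' : |A1 - A2| * (A1 + A2) = |(A1-A2)*(A1+A2)| := by
      rw [abs_mul, abs_of_pos (by linarith : (0:ℝ) < A1 + A2)]
    rw [h2'] at h1
    linarith
  have hBd : |B1 - B2| * M ≤ 8*n := by
    have h1 : |B1 - B2| * (2*M) ≤ |B1 - B2| * (B1 + B2) :=
      mul_le_mul_of_nonneg_left (by linarith) (abs_nonneg _)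
    have h2' : |B1 - B2| * (B1 + B2) = |(B1-B2)*(B1+B2)| := by
      rw [abs_mul, abs_of_pos (by linarith : (0:ℝ) < B1 + B2)]
    rw [h2'] at h1
    linarith
  have hA1sq' : A1^2 ≤ 16*M^2 := by
    calc A1^2 ≤ (4*M)^2 := pow_le_pow_left₀ hA1p.le hA1hi 2
      _ = 16*M^2 := by ring
  have hB1sq' : B1^2 ≤ 16*M^2 := by
    calc B1^2 ≤ (4*M)^2 := pow_le_pow_left₀ hB1p.le hB1hi 2
      _ = 16*M^2 := by ring
  have hEdiff : |E1 - E2| * M ≤ 288 * n * M^2 := by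
    have hid : E1 - E2 = A1^2 * (B1 - B2) + B2 * ((A1 - A2)*(A1 + A2))
        + B1^2 * (A1 - A2) + A2 * ((B1 - B2)*(B1 + B2)) := by
      rw [hE1', hE2']; ring
    have h1 : |E1 - E2| ≤ A1^2 * |B1 - B2| + 8*n*B2 + B1^2 * |A1 - A2| + 16*n*A2 := by
      have u1 : B2 * |(A1 - A2)*(A1+A2)| ≤ 8*n*B2 := by
        rw [mul_comm (8*n) B2]; exact mul_le_mul_of_nonneg_left h2 hB2p.le
      have u2 : A2 * |(B1 - B2)*(B1+B2)| ≤ 16*n*A2 := by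
        rw [mul_comm (16*n) A2]; exact mul_le_mul_of_nonneg_left h3 hA2p.le
      have e1' : |A1^2 * (B1 - B2)| = A1^2 * |B1 - B2| := by
        rw [abs_mul, abs_pow, abs_of_pos hA1p]
      have e2' : |B2 * ((A1 - A2)*(A1 + A2))| = B2 * |(A1 - A2)*(A1+A2)| := by
        rw [abs_mul, abs_of_pos hB2p]
      have e3' : |B1^2 * (A1 - A2)| = B1^2 * |A1 - A2| := by
        rw [abs_mul, abs_pow, abs_of_pos hB1p]
      have e4' : |A2 * ((B1 - B2)*(B1 + B2))| = A2 * |(B1 - B2)*(B1+B2)| := by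
        rw [abs_mul, abs_of_pos hA2p]
      have t1' := abs_add_le (A1^2 * (B1 - B2) + B2 * ((A1 - A2)*(A1 + A2))
          + B1^2 * (A1 - A2)) (A2 * ((B1 - B2)*(B1 + B2)))
      have t2' := abs_add_le (A1^2 * (B1 - B2) + B2 * ((A1 - A2)*(A1 + A2)))
          (B1^2 * (A1 - A2))
      have t3' := abs_add_le (A1^2 * (B1 - B2)) (B2 * ((A1 - A2)*(A1 + A2)))
      rw [hid]
      rw [e1', e2'] at t3'
      rw [e3'] at t2'
      rw [e4'] at t1'
      linarith
    have hB2M : B2 * M ≤ 4*M^2 := by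
      calc B2 * M ≤ 4*M*M := mul_le_mul_of_nonneg_right hB2hi hM.le
        _ = 4*M^2 := by ring
    have hA2M : A2 * M ≤ 4*M^2 := by
      calc A2 * M ≤ 4*M*M := mul_le_mul_of_nonneg_right hA2hi hM.le
        _ = 4*M^2 := by ring
    calc |E1 - E2| * M
        ≤ (A1^2 * |B1 - B2| + 8*n*B2 + B1^2 * |A1 - A2| + 16*n*A2) * M :=
          mul_le_mul_of_nonneg_right h1 hM.le
      _ = A1^2 * (|B1 - B2| * M) + 8*n*(B2*M) + B1^2 * (|A1 - A2| * M) + 16*n*(A2*M) := by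
          ring
      _ ≤ 16*M^2 * (8*n) + 8*n*(4*M^2) + 16*M^2 * (4*n) + 16*n*(4*M^2) := by
          gcongr <;> first | positivity | linarith [abs_nonneg (A1-A2), abs_nonneg (B1-B2)]
      _ ≤ 288 * n * M^2 := le_of_eq (by ring)
  have hEd' : |E1 - E2| ≤ 288*n*M := by
    apply le_of_mul_le_mul_right _ hM
    calc |E1 - E2| * M ≤ 288*n*M^2 := hEdiff
      _ = 288*n*M*M := by ring
  -- rewrite the two differences
  have e1 := diff_eq (d := d) (s := s1) (t := t1) hd
  have e2 := diff_eq (d := d) (s := s2) (t := t2) hd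
  rw [← hA1, ← hB1, ← hE1'] at e1
  rw [← hA2, ← hB2, ← hE2'] at e2
  rw [e1, e2, div_add_div _ _ hE1pos.ne' hE2pos.ne', abs_div,
    abs_of_pos (mul_pos hE1pos hE2pos)]
  have hNid : (t1^2 - s1^2) * E2 + E1 * (t2^2 - s2^2)
      = 4*x3*y3*(E1+E2) + 8*n*x3*(E1-E2) := by
    rw [hs1, ht1, hs2, ht2]; ring
  have w1 : |4*x3*y3*(E1+E2)| ≤ 1024*M^3 := by
    rw [abs_of_nonneg (mul_nonneg (mul_nonneg (by linarith) hy0) (by linarith))]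
    have hb : 4*x3*y3 ≤ 4 := by
      have h' : x3*y3 ≤ 1 := mul_le_one₀ hx1 hy0 hy1
      linarith
    have := mul_le_mul hb (by linarith : E1 + E2 ≤ 256*M^3) (by linarith) (by norm_num)
    linarith
  have w2 : |8*n*x3*(E1-E2)| ≤ 2304*M^3 := by
    rw [abs_mul]
    have h8 : |8*n*x3| ≤ 8*n := by
      rw [abs_of_nonneg (mul_nonneg (by linarith) hx0)]
      have := mul_le_mul_of_nonneg_left hx1 (by linarith : (0:ℝ) ≤ 8*n)
      linarith
    have hstep := mul_le_mul h8 hEd' (abs_nonneg _) (by linarith : (0:ℝ) ≤ 8*n)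
    have hcube : n^2*M ≤ M^3 := by
      have h' : n*n ≤ M*M := mul_le_mul hMn hMn (by linarith) (by linarith)
      have h'' := mul_le_mul_of_nonneg_right h' hM.le
      calc n^2*M = n*n*M := by ring
        _ ≤ M*M*M := h''
        _ = M^3 := by ring
    calc |8*n*x3| * |E1-E2| ≤ 8*n*(288*n*M) := hstep
      _ = 2304*(n^2*M) := by ring
      _ ≤ 2304*M^3 := by linarith
      _ = 2304*M^3 := by ring
  have hnum : |(t1^2 - s1^2) * E2 + E1 * (t2^2 - s2^2)| ≤ 3328*M^3 := by
    rw [hNid]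
    calc |4*x3*y3*(E1+E2) + 8*n*x3*(E1-E2)|
        ≤ |4*x3*y3*(E1+E2)| + |8*n*x3*(E1-E2)| := abs_add_le _ _
      _ ≤ 3328*M^3 := by linarith
  have hden : 4*M^6 ≤ E1*E2 := by
    have := mul_le_mul hE1lo hE2lo (by positivity) (by positivity : (0:ℝ) ≤ E1)
    calc (4:ℝ)*M^6 = 2*M^3*(2*M^3) := by ring
      _ ≤ E1*E2 := this
  calc |(t1^2 - s1^2) * E2 + E1 * (t2^2 - s2^2)| / (E1*E2)
      ≤ 3328*M^3 / (4*M^6) := div_le_div₀ (by positivity) hnum (by positivity) hden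
    _ ≤ 6656 / (d+n)^3 := by
        rw [div_le_div_iff₀ (by positivity) (by positivity)]
        have hcube : (d+n)^3 ≤ 8*M^3 := by
          have h1 : (d+n)^3 ≤ (2*M)^3 :=
            pow_le_pow_left₀ (by linarith) (by linarith) 3
          calc (d+n)^3 ≤ (2*M)^3 := h1
            _ = 8*M^3 := by ring
        have hkey := mul_le_mul_of_nonneg_left hcube (by positivity : (0:ℝ) ≤ 3328*M^3)
        calc 3328*M^3 * (d+n)^3 ≤ 3328*M^3*(8*M^3) := hkey
          _ ≤ 6656 * (4*M^6) := le_of_eq (by ring)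

lemma single_bound {d a s t K : ℝ} (hd : 0 < d) (ha1 : |a| ≤ 1) (has : |a| ≤ |s|)
    (hst : |s| ≤ |t|) (hK : |t^2 - s^2| ≤ K) (hK4 : 4 ≤ K) :
    |1/Real.sqrt (d^2+s^2) - 1/Real.sqrt (d^2+t^2)| ≤ (3*K) / (d*(1+d) + |a|) := by
  have hSs := S_pos (t := s) hd
  have hSt := S_pos (t := t) hd
  have hden : 0 < d*(1+d) + |a| := by positivity
  rcases le_or_gt d 1 with hd1 | hd1
  · -- small d : use monotonicity
    have hmono : Real.sqrt (d^2+s^2) ≤ Real.sqrt (d^2+t^2) := S_mono hst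
    have h1 : 1/Real.sqrt (d^2+t^2) ≤ 1/Real.sqrt (d^2+s^2) :=
      one_div_le_one_div_of_le hSs hmono
    have h2 : |1/Real.sqrt (d^2+s^2) - 1/Real.sqrt (d^2+t^2)|
        = 1/Real.sqrt (d^2+s^2) - 1/Real.sqrt (d^2+t^2) := abs_of_nonneg (by linarith)
    rw [h2]
    have h3 : 1/Real.sqrt (d^2+s^2) - 1/Real.sqrt (d^2+t^2) ≤ 1/Real.sqrt (d^2+s^2) := by
      have : 0 < 1/Real.sqrt (d^2+t^2) := by positivity
      linarith
    refine le_trans h3 ?_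
    rw [div_le_div_iff₀ hSs hden]
    have f1 : d ≤ Real.sqrt (d^2+s^2) := S_ge_d hd.le
    have f2 : |a| ≤ Real.sqrt (d^2+s^2) := le_trans has S_ge_abs
    have f3 : d^2 ≤ d := by nlinarith
    nlinarith [mul_nonneg hSs.le (sub_nonneg.2 hK4)]
  · -- large d : use the difference formula
    rw [diff_eq hd, abs_div,
      abs_of_pos (by positivity : (0:ℝ) < Real.sqrt (d^2+s^2) * Real.sqrt (d^2+t^2)
        * (Real.sqrt (d^2+s^2) + Real.sqrt (d^2+t^2)))]
    have f1 : d ≤ Real.sqrt (d^2+s^2) := S_ge_d hd.le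
    have f2 : d ≤ Real.sqrt (d^2+t^2) := S_ge_d hd.le
    have hlow : d*d*(2*d) ≤ Real.sqrt (d^2+s^2) * Real.sqrt (d^2+t^2)
        * (Real.sqrt (d^2+s^2) + Real.sqrt (d^2+t^2)) := by
      have h12 : d*d ≤ Real.sqrt (d^2+s^2) * Real.sqrt (d^2+t^2) :=
        mul_le_mul f1 f2 hd.le hSs.le
      exact mul_le_mul h12 (by linarith) (by positivity) (by positivity)
    calc |t^2-s^2| / (Real.sqrt (d^2+s^2) * Real.sqrt (d^2+t^2)
          * (Real.sqrt (d^2+s^2) + Real.sqrt (d^2+t^2)))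
        ≤ K / (d*d*(2*d)) := div_le_div₀ (by linarith) hK (by positivity) hlow
      _ ≤ 3*K / (d*(1+d) + |a|) := by
          rw [div_le_div_iff₀ (by positivity) hden]
          have h6 : d*(1+d) + |a| ≤ 3*d^3 := by nlinarith
          nlinarith [mul_le_mul_of_nonneg_left h6 (by linarith : (0:ℝ) ≤ K)]

lemma term_bound_generic {d s t K n : ℝ} (hd : 0 < d) (hns : n ≤ |s|) (hnt : n ≤ |t|)
    (hn : 0 < n) (hK : |t^2 - s^2| ≤ K) (hK0 : 0 ≤ K) :
    |1/Real.sqrt (d^2+s^2) - 1/Real.sqrt (d^2+t^2)| ≤ K/(2*n^3) := by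
  have hSs := S_pos (t := s) hd
  have hSt := S_pos (t := t) hd
  have f1 : n ≤ Real.sqrt (d^2+s^2) := le_trans hns S_ge_abs
  have f2 : n ≤ Real.sqrt (d^2+t^2) := le_trans hnt S_ge_abs
  rw [diff_eq hd, abs_div,
    abs_of_pos (by positivity : (0:ℝ) < Real.sqrt (d^2+s^2) * Real.sqrt (d^2+t^2)
      * (Real.sqrt (d^2+s^2) + Real.sqrt (d^2+t^2)))]
  have hlow : n*n*(2*n) ≤ Real.sqrt (d^2+s^2) * Real.sqrt (d^2+t^2)
      * (Real.sqrt (d^2+s^2) + Real.sqrt (d^2+t^2)) := by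
    have h12 : n*n ≤ Real.sqrt (d^2+s^2) * Real.sqrt (d^2+t^2) :=
      mul_le_mul f1 f2 hn.le hSs.le
    exact mul_le_mul h12 (by linarith) (by positivity) (by positivity)
  calc |t^2-s^2| / _ ≤ K / (n*n*(2*n)) := div_le_div₀ hK0 hK (by positivity) hlow
    _ = K/(2*n^3) := by ring_nf

lemma tele_step {Y : ℝ} (hY : 1 ≤ Y) : 6656/((Y+1)^3) ≤ 3328/Y^2 - 3328/(Y+1)^2 := by
  have h1 : (0:ℝ) < Y := by linarith
  have h2 : (0:ℝ) < Y + 1 := by linarith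
  have hr : 3328/Y^2 - 3328/(Y+1)^2 = 3328*((Y+1)^2 - Y^2)/(Y^2*(Y+1)^2) := by
    field_simp
  rw [hr, div_le_div_iff₀ (by positivity) (by positivity)]
  nlinarith [mul_nonneg (sq_nonneg (Y+1)) (by linarith : (0:ℝ) ≤ 3*Y+1),
    sq_nonneg (Y+1), sq_nonneg Y]

lemma tail_summable {d : ℝ} (hd : 0 < d) :
    Summable (fun k : ℕ => 6656/((d + (k:ℝ) + 2)^3)) := by
  have hbase : Summable (fun k : ℕ => (6656:ℝ) * (1/((k:ℝ)+1)^2)) := by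
    apply Summable.mul_left
    have := (summable_nat_add_iff (f := fun n : ℕ => 1/((n:ℝ))^2) 1).2 (by
      simpa using Real.summable_one_div_nat_pow.2 (by norm_num : 2 ≤ 2))
    simpa using this
  apply Summable.of_nonneg_of_le (fun k => by positivity) _ hbase
  intro k
  have h1 : (0:ℝ) < (k:ℝ)+1 := by positivity
  have h2 : ((k:ℝ)+1)^2 ≤ (d+(k:ℝ)+2)^3 := by
    have : ((k:ℝ)+1)^2 ≤ ((k:ℝ)+2)^2 := by nlinarith [Nat.cast_nonneg (α := ℝ) k]
    have h3 : ((k:ℝ)+2)^2 ≤ (d+(k:ℝ)+2)^2 := by nlinarith [Nat.cast_nonneg (α := ℝ) k]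
    have h4 : (d+(k:ℝ)+2)^2 ≤ (d+(k:ℝ)+2)^3 := by
      have h5 : (1:ℝ) ≤ d+(k:ℝ)+2 := by have := Nat.cast_nonneg (α := ℝ) k; linarith
      nlinarith [sq_nonneg (d+(k:ℝ)+2)]
    linarith
  rw [mul_one_div]
  apply div_le_div₀ (by positivity) le_rfl (by positivity) h2

lemma tail_sum_bound {d : ℝ} (hd : 0 < d) :
    ∑' k : ℕ, 6656/((d + (k:ℝ) + 2)^3) ≤ 3328/(1+d)^2 := by
  apply Summable.tsum_le_of_sum_le (tail_summable hd)
  intro u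
  set G : ℕ → ℝ := fun j => 3328/((1+d+(j:ℝ))^2) with hG
  obtain ⟨N, hN⟩ := u.exists_nat_subset_range
  have hnn : ∀ k ∈ Finset.range N, k ∉ u → 0 ≤ 6656/((d + (k:ℝ) + 2)^3) := by
    intro k _ _; positivity
  calc ∑ k ∈ u, 6656/((d + (k:ℝ) + 2)^3)
      ≤ ∑ k ∈ Finset.range N, 6656/((d + (k:ℝ) + 2)^3) :=
        Finset.sum_le_sum_of_subset_of_nonneg hN hnn
    _ ≤ ∑ k ∈ Finset.range N, (G k - G (k+1)) := by
        apply Finset.sum_le_sum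
        intro k _
        have : d + (k:ℝ) + 2 = (1+d+(k:ℝ)) + 1 := by ring
        rw [this, hG]
        have hY : (1:ℝ) ≤ 1+d+(k:ℝ) := by have := Nat.cast_nonneg (α := ℝ) k; linarith
        have := tele_step hY
        simp only [Nat.cast_add, Nat.cast_one]
        calc 6656/((1+d+(k:ℝ)+1)^3) ≤ 3328/(1+d+(k:ℝ))^2 - 3328/((1+d+(k:ℝ))+1)^2 := this
          _ = 3328/(1+d+(k:ℝ))^2 - 3328/((1+d+((k:ℝ)+1))^2) := by ring_nf
    _ = G 0 - G N := Finset.sum_range_sub' G N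
    _ ≤ G 0 := by
        have : 0 ≤ G N := by rw [hG]; positivity
        linarith
    _ = 3328/(1+d)^2 := by rw [hG]; norm_num

lemma term_abs_bound {d x3 y3 w : ℝ} (hd : 0 < d) (hx0 : 0 ≤ x3) (hx1 : x3 ≤ 1)
    (hy0 : 0 ≤ y3) (hy1 : y3 ≤ 1) (hw : 2 ≤ |w|) :
    |1/Real.sqrt (d^2+(x3-y3+2*w)^2) - 1/Real.sqrt (d^2+(x3+y3-2*w)^2)| ≤ 5/w^2 := by
  have hn : 0 < |w| := by linarith
  have hw1 : w ≤ |w| := le_abs_self w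
  have hw2 : -|w| ≤ w := neg_abs_le w
  have hns : |w| ≤ |x3-y3+2*w| := by
    rcases le_or_gt 0 w with h | h
    · have hg : 2 ≤ w := by rwa [abs_of_nonneg h] at hw
      rw [abs_of_nonneg (show (0:ℝ) ≤ x3-y3+2*w by linarith), abs_of_nonneg h]; linarith
    · have hg : w ≤ -2 := by rw [abs_of_neg h] at hw; linarith
      rw [abs_of_nonpos (show x3-y3+2*w ≤ 0 by linarith), abs_of_neg h]; linarith
  have hnt : |w| ≤ |x3+y3-2*w| := by
    rcases le_or_gt 0 w with h | h
    · have hg : 2 ≤ w := by rwa [abs_of_nonneg h] at hw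
      rw [abs_of_nonpos (show x3+y3-2*w ≤ 0 by linarith), abs_of_nonneg h]; linarith
    · have hg : w ≤ -2 := by rw [abs_of_neg h] at hw; linarith
      rw [abs_of_nonneg (show (0:ℝ) ≤ x3+y3-2*w by linarith), abs_of_neg h]; linarith
  have hK : |(x3+y3-2*w)^2 - (x3-y3+2*w)^2| ≤ 10*|w| := by
    have hid : (x3+y3-2*w)^2 - (x3-y3+2*w)^2 = (2*x3)*(2*y3-4*w) := by ring
    rw [hid, abs_mul]
    have h1 : |2*x3| ≤ 2 := by rw [abs_of_nonneg (by linarith)]; linarith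
    have h2 : |2*y3-4*w| ≤ 4*|w|+2 := abs_le.2 ⟨by linarith, by linarith⟩
    have := mul_le_mul h1 h2 (abs_nonneg _) (by norm_num)
    linarith
  have hfin := term_bound_generic hd hns hnt hn hK (by linarith)
  have heq : 10*|w|/(2*|w|^3) = 5/w^2 := by
    have hw0 : w ≠ 0 := by intro h; rw [h] at hn; simp at hn
    have habs : |w| ≠ 0 := by positivity
    rw [show |w|^3 = |w|^2*|w| by ring, sq_abs]
    field_simp
    ring
  rw [heq] at hfin
  exact hfin

lemma sq_inv_summable : Summable (fun k : ℕ => (5:ℝ)/((k:ℝ)+2)^2) := by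
  have hb : Summable (fun n : ℕ => (1:ℝ)/((n:ℝ))^2) := by
    simpa using Real.summable_one_div_nat_pow.2 (by norm_num : 2 ≤ 2)
  have := (summable_nat_add_iff (f := fun n : ℕ => (1:ℝ)/((n:ℝ))^2) 2).2 hb
  have h2 : Summable (fun n : ℕ => (1:ℝ)/((n:ℝ)+2)^2) := by
    apply this.congr
    intro n; push_cast; ring
  simpa [div_eq_mul_inv] using h2.mul_left (5:ℝ)

lemma tsum_bound {d x3 y3 : ℝ} (hd : 0 < d) (hx0 : 0 ≤ x3) (hx1 : x3 ≤ 1)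
    (hy0 : 0 ≤ y3) (hy1 : y3 ≤ 1) :
    |∑' n : ℤ, greenTerm d x3 y3 n| ≤ 3400 / (d*(1+d) + |x3 - y3|) := by
  set F := greenTerm d x3 y3 with hF
  have habs1 : |x3 - y3| ≤ 1 := abs_le.2 ⟨by linarith, by linarith⟩
  have hden : 0 < d*(1+d) + |x3-y3| := by positivity
  -- pointwise bound for |n| ≥ 2
  have hF5 : ∀ n : ℤ, 2 ≤ |((n:ℤ):ℝ)| → |F n| ≤ 5/(((n:ℤ):ℝ))^2 := fun n hn =>
    term_abs_bound hd hx0 hx1 hy0 hy1 hn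
  -- summability of the two halves
  have hsum_pos : Summable (fun k : ℕ => F ((k:ℤ) + 1)) := by
    rw [← summable_nat_add_iff 1]
    apply Summable.of_norm_bounded (g := fun k : ℕ => (5:ℝ)/((k:ℝ)+2)^2) sq_inv_summable
    intro k
    rw [Real.norm_eq_abs]
    have hc : (2:ℝ) ≤ |((((k+1:ℕ):ℤ) + 1 : ℤ) : ℝ)| := by
      push_cast
      rw [abs_of_nonneg (by positivity)]
      have := Nat.cast_nonneg (α := ℝ) k; linarith
    refine le_trans (hF5 _ hc) (le_of_eq ?_)
    push_cast; ring
  have hsum_neg : Summable (fun k : ℕ => F (-((k:ℤ) + 1))) := by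
    rw [← summable_nat_add_iff 1]
    apply Summable.of_norm_bounded (g := fun k : ℕ => (5:ℝ)/((k:ℝ)+2)^2) sq_inv_summable
    intro k
    rw [Real.norm_eq_abs]
    have hc : (2:ℝ) ≤ |((-(((k+1:ℕ):ℤ) + 1) : ℤ) : ℝ)| := by
      push_cast
      rw [abs_neg, abs_of_nonneg (by positivity)]
      have := Nat.cast_nonneg (α := ℝ) k; linarith
    refine le_trans (hF5 _ hc) (le_of_eq ?_)
    push_cast; ring
  -- pair bound for the tail
  have hpairs : ∀ k : ℕ, |F ((k:ℤ)+2) + F (-((k:ℤ)+2))| ≤ 6656/((d+(k:ℝ)+2)^3) := by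
    intro k
    have hexp : F ((k:ℤ)+2) + F (-((k:ℤ)+2))
        = (1/Real.sqrt (d^2+(x3-y3+2*((k:ℝ)+2))^2)
            - 1/Real.sqrt (d^2+(x3+y3-2*((k:ℝ)+2))^2))
          + (1/Real.sqrt (d^2+(x3-y3+2*(-((k:ℝ)+2)))^2)
            - 1/Real.sqrt (d^2+(x3+y3-2*(-((k:ℝ)+2)))^2)) := by
      simp only [hF, greenTerm]
      push_cast
      ring_nf
    rw [hexp]
    have := pair_bound (n := (k:ℝ)+2) hd hx0 hx1 hy0 hy1
      (by have := Nat.cast_nonneg (α := ℝ) k; linarith)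
    calc _ ≤ 6656 / (d+((k:ℝ)+2))^3 := this
      _ = 6656/((d+(k:ℝ)+2)^3) := by ring_nf
  -- decomposition of the integer sum
  have hdecomp : ∑' n : ℤ, F n
      = (∑' k : ℕ, F ((k:ℤ)+1)) + F 0 + ∑' k : ℕ, F (-((k:ℤ)+1)) :=
    tsum_of_add_one_of_neg_add_one hsum_pos hsum_neg
  set p : ℕ → ℝ := fun k => F ((k:ℤ)+1) + F (-((k:ℤ)+1)) with hp
  have hsp : Summable p := hsum_pos.add hsum_neg
  have hPN : (∑' k : ℕ, F ((k:ℤ)+1)) + (∑' k : ℕ, F (-((k:ℤ)+1))) = ∑' k : ℕ, p k :=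
    (Summable.tsum_add hsum_pos hsum_neg).symm
  have hzero : ∑' k, p k = p 0 + ∑' k, p (k+1) := Summable.tsum_eq_zero_add hsp
  have hsp1 : Summable (fun k => p (k+1)) := (summable_nat_add_iff 1).2 hsp
  have hsp1abs : Summable (fun k => |p (k+1)|) := hsp1.abs
  -- tail estimate
  have hT : |∑' k, p (k+1)| ≤ 3328/(1+d)^2 := by
    have h1 : |∑' k, p (k+1)| ≤ ∑' k, |p (k+1)| := by
      simpa [Real.norm_eq_abs] using
        norm_tsum_le_tsum_norm (f := fun k => p (k+1))
          (by simpa [Real.norm_eq_abs] using hsp1abs)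
    have h2 : ∑' k, |p (k+1)| ≤ ∑' k : ℕ, 6656/((d+(k:ℝ)+2)^3) := by
      apply Summable.tsum_le_tsum _ hsp1abs (tail_summable hd)
      intro k
      have hcast : (((k+1:ℕ):ℤ) + 1 : ℤ) = (k:ℤ)+2 := by push_cast; ring
      show |F (((k+1:ℕ):ℤ)+1) + F (-(((k+1:ℕ):ℤ)+1))| ≤ _
      rw [hcast]
      exact hpairs k
    linarith [tail_sum_bound hd]
  -- n = 0
  have h0 : |F 0| ≤ 12 / (d*(1+d) + |x3-y3|) := by
    have hexp : F 0 = 1/Real.sqrt (d^2+(x3-y3)^2) - 1/Real.sqrt (d^2+(x3+y3)^2) := by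
      simp only [hF, greenTerm]; norm_num
    rw [hexp]
    have hst : |x3-y3| ≤ |x3+y3| := by
      rw [abs_of_nonneg (by linarith : (0:ℝ) ≤ x3+y3)]
      exact abs_le.2 ⟨by linarith, by linarith⟩
    have hK : |(x3+y3)^2 - (x3-y3)^2| ≤ 4 := by
      rw [show (x3+y3)^2 - (x3-y3)^2 = 4*(x3*y3) by ring,
        abs_of_nonneg (by positivity)]
      nlinarith
    have := single_bound hd habs1 le_rfl hst hK (by norm_num)
    calc _ ≤ 3*4 / (d*(1+d) + |x3-y3|) := this
      _ = 12 / (d*(1+d) + |x3-y3|) := by norm_num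
  -- n = 1
  have h1 : |F 1| ≤ 24 / (d*(1+d) + |x3-y3|) := by
    have hexp : F 1 = 1/Real.sqrt (d^2+(x3-y3+2)^2) - 1/Real.sqrt (d^2+(x3+y3-2)^2) := by
      simp only [hF, greenTerm]; norm_num
    rw [hexp, abs_sub_comm]
    have has : |x3-y3| ≤ |x3+y3-2| := by
      rw [abs_of_nonpos (by linarith : x3+y3-2 ≤ 0)]
      exact abs_le.2 ⟨by linarith, by linarith⟩
    have hst : |x3+y3-2| ≤ |x3-y3+2| := by
      rw [abs_of_nonpos (by linarith : x3+y3-2 ≤ 0),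
        abs_of_nonneg (by linarith : (0:ℝ) ≤ x3-y3+2)]
      linarith
    have hK : |(x3-y3+2)^2 - (x3+y3-2)^2| ≤ 8 := by
      rw [show (x3-y3+2)^2 - (x3+y3-2)^2 = (2*x3)*(4-2*y3) by ring,
        abs_of_nonneg (by nlinarith)]
      nlinarith
    have := single_bound hd habs1 has hst hK (by norm_num)
    calc _ ≤ 3*8 / (d*(1+d) + |x3-y3|) := this
      _ = 24 / (d*(1+d) + |x3-y3|) := by norm_num
  -- n = -1
  have hm1 : |F (-1)| ≤ 36 / (d*(1+d) + |x3-y3|) := by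
    have hexp : F (-1) = 1/Real.sqrt (d^2+(x3-y3-2)^2) - 1/Real.sqrt (d^2+(x3+y3+2)^2) := by
      simp only [hF, greenTerm]; norm_num
      ring_nf
    rw [hexp]
    have has : |x3-y3| ≤ |x3-y3-2| := by
      rw [abs_of_nonpos (by linarith : x3-y3-2 ≤ 0)]
      exact abs_le.2 ⟨by linarith, by linarith⟩
    have hst : |x3-y3-2| ≤ |x3+y3+2| := by
      rw [abs_of_nonpos (by linarith : x3-y3-2 ≤ 0),
        abs_of_nonneg (by linarith : (0:ℝ) ≤ x3+y3+2)]
      linarith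
    have hK : |(x3+y3+2)^2 - (x3-y3-2)^2| ≤ 12 := by
      rw [show (x3+y3+2)^2 - (x3-y3-2)^2 = (2*y3+4)*(2*x3) by ring,
        abs_of_nonneg (by nlinarith)]
      nlinarith
    have := single_bound hd habs1 has hst hK (by norm_num)
    calc _ ≤ 3*12 / (d*(1+d) + |x3-y3|) := this
      _ = 36 / (d*(1+d) + |x3-y3|) := by norm_num
  -- put everything together
  have hp0 : p 0 = F 1 + F (-1) := by norm_num [hp]
  have hvalue : ∑' n : ℤ, F n = F 0 + (F 1 + F (-1)) + ∑' k, p (k+1) := by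
    rw [hdecomp]
    have := hPN
    have := hzero
    rw [← hp0]
    linarith
  have htailden : 3328/(1+d)^2 ≤ 3328 / (d*(1+d) + |x3-y3|) := by
    apply div_le_div_of_nonneg_left (by norm_num) hden
    nlinarith
  rw [hvalue]
  calc |F 0 + (F 1 + F (-1)) + ∑' k, p (k+1)|
      ≤ |F 0| + |F 1| + |F (-1)| + |∑' k, p (k+1)| := by
        have := abs_add_le (F 0 + (F 1 + F (-1))) (∑' k, p (k+1))
        have := abs_add_le (F 0) (F 1 + F (-1))
        have := abs_add_le (F 1) (F (-1))
        linarith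
    _ ≤ 12 / (d*(1+d) + |x3-y3|) + 24 / (d*(1+d) + |x3-y3|)
        + 36 / (d*(1+d) + |x3-y3|) + 3328 / (d*(1+d) + |x3-y3|) := by
        linarith [le_trans hT htailden]
    _ = 3400 / (d*(1+d) + |x3-y3|) := by ring

/-- Pointwise decay bound for the Green function of the Laplacian on
`ℝ² × [0,1]` with Dirichlet boundary conditions. -/
theorem green_function_decay :
    ∃ c : ℝ, 0 < c ∧
      ∀ (x' y' : EuclideanSpace ℝ (Fin 2)) (x3 y3 : ℝ),
        x3 ∈ Set.Icc (0:ℝ) 1 → y3 ∈ Set.Icc (0:ℝ) 1 → x' ≠ y' →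
        |greenG x' x3 y' y3| ≤ c / (‖x' - y'‖ * (1 + ‖x' - y'‖) + |x3 - y3|) := by
  refine ⟨3400, by norm_num, ?_⟩
  intro x' y' x3 y3 hx hy hne
  have hd : 0 < ‖x' - y'‖ := norm_pos_iff.2 (sub_ne_zero.2 hne)
  have hb := tsum_bound hd hx.1 hx.2 hy.1 hy.2
  show |(1 / (4 * π)) * ∑' n : ℤ, greenTerm (‖x' - y'‖) x3 y3 n| ≤ _
  rw [abs_mul, abs_of_pos (by positivity : (0:ℝ) < 1/(4*π))]
  have h2 : 1/(4*π) ≤ 1 := by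
    rw [div_le_one (by positivity)]
    nlinarith [pi_gt_three]
  calc 1/(4*π) * |∑' n : ℤ, greenTerm (‖x' - y'‖) x3 y3 n|
      ≤ 1 * |∑' n : ℤ, greenTerm (‖x' - y'‖) x3 y3 n| :=
        mul_le_mul_of_nonneg_right h2 (abs_nonneg _)
    _ = |∑' n : ℤ, greenTerm (‖x' - y'‖) x3 y3 n| := one_mul _
    _ ≤ 3400 / (‖x' - y'‖ * (1 + ‖x' - y'‖) + |x3 - y3|) := hb
end

section
/- Let u be a smooth axially symmetric solution of the stationary Navier–Stokes system (ASNS) with smooth axially symmetric pressure p on the slab ℝ²×[0,1], satisfying the Dirichlet boundary condition u = 0 at z = 0 and z = 1 and u(x) → 0 uniformly as r = |x'| → ∞. If the swirl component has finite Dirichlet energy, i.e. ∫₀¹∫₀^∞ ( |∂_r u^θ|² + |∂_z u^θ|² + (u^θ/r)² ) r dr dz < ∞, then u^θ ≡ 0. -/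
open MeasureTheory Real

section helpers
variable {F : ℝ × ℝ → ℝ}

lemma sliceR_contDiff (hF : ContDiff ℝ (⊤ : ℕ∞) F) (z : ℝ) :
    ContDiff ℝ (⊤ : ℕ∞) (fun s : ℝ => F (s, z)) :=
  hF.comp (contDiff_id.prodMk contDiff_const)

lemma sliceZ_contDiff (hF : ContDiff ℝ (⊤ : ℕ∞) F) (r : ℝ) :
    ContDiff ℝ (⊤ : ℕ∞) (fun t : ℝ => F (r, t)) :=
  hF.comp (contDiff_const.prodMk contDiff_id)

lemma deriv_contDiff {g : ℝ → ℝ} (hg : ContDiff ℝ (⊤ : ℕ∞) g) :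
    ContDiff ℝ (⊤ : ℕ∞) (deriv g) := by
  have : ContDiff ℝ (⊤ : ℕ∞) g ↔ _ := contDiff_infty_iff_deriv
  exact (this.mp hg).2

end helpers

lemma second_deriv_nonpos_of_isLocalMax {g : ℝ → ℝ} (hg : ContDiff ℝ (⊤ : ℕ∞) g)
    {a : ℝ} (h : IsLocalMax g a) : deriv (deriv g) a ≤ 0 := by
  by_contra hk
  push_neg at hk
  have hcont : Continuous (deriv (deriv g)) := (deriv_contDiff (deriv_contDiff hg)).continuous
  have hev : ∀ᶠ x in nhds a, 0 < deriv (deriv g) x :=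
    (hcont.tendsto a).eventually (eventually_gt_nhds hk)
  obtain ⟨δ, hδ, hball⟩ := Metric.eventually_nhds_iff.mp hev
  set b := a + δ/2 with hb
  have hab : a < b := by simp [hb]; linarith
  have hsub : ∀ x ∈ Set.Ioo a b, 0 < deriv (deriv g) x := by
    intro x hx
    apply hball
    rw [Real.dist_eq, abs_lt]
    have h1 := hx.1; have h2 := hx.2; rw [hb] at h2
    constructor <;> linarith
  have hmono1 : StrictMonoOn (deriv g) (Set.Icc a b) := by
    apply strictMonoOn_of_deriv_pos (convex_Icc a b)
      ((deriv_contDiff hg).continuous.continuousOn)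
    intro x hx
    rw [interior_Icc] at hx
    exact hsub x hx
  have hd0 : deriv g a = 0 := h.deriv_eq_zero
  have hpos : ∀ x ∈ Set.Ioo a b, 0 < deriv g x := by
    intro x hx
    have := hmono1 (Set.left_mem_Icc.2 hab.le) ⟨hx.1.le, hx.2.le⟩ hx.1
    rwa [hd0] at this
  have hmono2 : StrictMonoOn g (Set.Icc a b) :=
    strictMonoOn_of_deriv_pos (convex_Icc a b) hg.continuous.continuousOn
      (fun x hx => hpos x (by rwa [interior_Icc] at hx))
  have h1 : ∀ᶠ x in nhdsWithin a (Set.Ioi a), g x ≤ g a := h.filter_mono nhdsWithin_le_nhds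
  have h2 : ∀ᶠ x in nhdsWithin a (Set.Ioi a), x ∈ Set.Ioc a b :=
    Ioc_mem_nhdsGT_of_mem ⟨le_refl a, hab⟩
  obtain ⟨x, hx1, hx2⟩ := (h1.and h2).exists
  have : g a < g x := hmono2 (Set.left_mem_Icc.2 hab.le) ⟨hx2.1.le, hx2.2⟩ hx2.1
  linarith

lemma diff_of_contDiff {g : ℝ → ℝ} (hg : ContDiff ℝ (⊤ : ℕ∞) g) :
    Differentiable ℝ g := (contDiff_infty_iff_deriv.mp hg).1

lemma max_principle (v c d : ℝ → ℝ → ℝ)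
    (hv : ContDiff ℝ (⊤ : ℕ∞) (fun q : ℝ × ℝ => v q.1 q.2))
    (a b B β : ℝ) (hab : a < b) (hβ : 0 ≤ β) (hB0 : 0 ≤ B)
    (hpde : ∀ r ∈ Set.Ioo a b, ∀ z ∈ Set.Ioo (0:ℝ) 1,
      pdr (pdr v) r z + pdz (pdz v) r z = c r z * pdr v r z + d r z * pdz v r z)
    (hdb : ∀ r ∈ Set.Ioo a b, ∀ z ∈ Set.Ioo (0:ℝ) 1, |d r z| ≤ β)
    (hbd1 : ∀ z ∈ Set.Icc (0:ℝ) 1, v a z ≤ B ∧ v b z ≤ B)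
    (hbd2 : ∀ r ∈ Set.Icc a b, v r 0 ≤ B ∧ v r 1 ≤ B) :
    ∀ r ∈ Set.Icc a b, ∀ z ∈ Set.Icc (0:ℝ) 1, v r z ≤ B := by
  intro r hr z hz
  set l : ℝ := β + 1 with hl
  have hlpos : 0 < l := by rw [hl]; linarith
  have key : ∀ ε : ℝ, 0 < ε → v r z ≤ B + ε * Real.exp l := by
    intro ε hε
    set W : ℝ × ℝ → ℝ := fun q => v q.1 q.2 + ε * Real.exp (l * q.2) with hW
    have hWc : Continuous W := by
      apply hv.continuous.add
      exact continuous_const.mul ((continuous_const.mul continuous_snd).rexp)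
    set Q : Set (ℝ × ℝ) := Set.Icc a b ×ˢ Set.Icc (0:ℝ) 1 with hQ
    have hQc : IsCompact Q := isCompact_Icc.prod isCompact_Icc
    have hQne : Q.Nonempty := ⟨(a, 0), by
      simp [hQ, Set.mem_prod, Set.mem_Icc, hab.le, le_refl, zero_le_one]⟩
    obtain ⟨q0, hq0Q, hq0max⟩ := hQc.exists_isMaxOn hQne hWc.continuousOn
    have hq0max' : ∀ q ∈ Q, W q ≤ W q0 := hq0max
    have hq0r : q0.1 ∈ Set.Icc a b := hq0Q.1
    have hq0z : q0.2 ∈ Set.Icc (0:ℝ) 1 := hq0Q.2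
    have hbdry : ¬ (q0.1 ∈ Set.Ioo a b ∧ q0.2 ∈ Set.Ioo (0:ℝ) 1) := by
      rintro ⟨hri, hzi⟩
      set r0 := q0.1 with hr0
      set z0 := q0.2 with hz0
      -- slice in r
      have hgrC : ContDiff ℝ (⊤ : ℕ∞) (fun s => v s z0) := sliceR_contDiff hv z0
      have hgr : IsLocalMax (fun s => v s z0) r0 := by
        have hnb : Set.Icc a b ∈ nhds r0 := Icc_mem_nhds hri.1 hri.2
        filter_upwards [hnb] with s hs
        have h1 : W (s, z0) ≤ W q0 := hq0max' (s, z0) ⟨hs, hq0z⟩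
        have h2 : v s z0 + ε * Real.exp (l * z0) ≤ v r0 z0 + ε * Real.exp (l * z0) := h1
        linarith
      have hdr0 : pdr v r0 z0 = 0 := hgr.deriv_eq_zero
      have hdrr : pdr (pdr v) r0 z0 ≤ 0 :=
        second_deriv_nonpos_of_isLocalMax hgrC hgr
      -- slice in z
      set E := Real.exp (l * z0) with hE
      have hEpos : 0 < E := Real.exp_pos _
      have hhC : ContDiff ℝ (⊤ : ℕ∞) (fun t => v r0 t + ε * Real.exp (l * t)) := by
        apply (sliceZ_contDiff hv r0).add
        exact contDiff_const.mul ((contDiff_const.mul contDiff_id).exp)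
      have hhmax : IsLocalMax (fun t => v r0 t + ε * Real.exp (l * t)) z0 := by
        have hnb : Set.Icc (0:ℝ) 1 ∈ nhds z0 := Icc_mem_nhds hzi.1 hzi.2
        filter_upwards [hnb] with t ht
        exact hq0max' (r0, t) ⟨hq0r, ht⟩
      have hexpder : ∀ t : ℝ, HasDerivAt (fun t' => Real.exp (l * t'))
          (Real.exp (l * t) * l) t := by
        intro t
        simpa using ((hasDerivAt_id t).const_mul l).exp
      have hder : ∀ t : ℝ, HasDerivAt (fun t' => v r0 t' + ε * Real.exp (l * t'))
          (pdz v r0 t + ε * (Real.exp (l * t) * l)) t := by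
        intro t
        exact (((diff_of_contDiff (sliceZ_contDiff hv r0)) t).hasDerivAt).add
          ((hexpder t).const_mul ε)
      have hderiv_h : deriv (fun t' => v r0 t' + ε * Real.exp (l * t'))
          = fun t => pdz v r0 t + ε * (Real.exp (l * t) * l) := by
        funext t; exact (hder t).deriv
      have hdz0 : pdz v r0 z0 + ε * (E * l) = 0 := by
        have h1 := hhmax.deriv_eq_zero
        rw [hderiv_h] at h1
        exact h1
      have hdzz : pdz (pdz v) r0 z0 + ε * (E * l * l) ≤ 0 := by
        have h2nd := second_deriv_nonpos_of_isLocalMax hhC hhmax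
        rw [hderiv_h] at h2nd
        have h1 : HasDerivAt (fun t' => pdz v r0 t') (pdz (pdz v) r0 z0) z0 :=
          ((diff_of_contDiff (deriv_contDiff (sliceZ_contDiff hv r0))) z0).hasDerivAt
      -- second summand
        have h2 : HasDerivAt (fun t' => ε * (Real.exp (l * t') * l))
            (ε * (Real.exp (l * z0) * l * l)) z0 :=
          ((hexpder z0).mul_const l).const_mul ε
        have h3 : deriv (fun t => pdz v r0 t + ε * (Real.exp (l * t) * l)) z0
            = pdz (pdz v) r0 z0 + ε * (Real.exp (l * z0) * l * l) := (h1.add h2).deriv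
        rw [h3] at h2nd
        exact h2nd
      -- plug into the PDE
      have hpde0 := hpde r0 hri z0 hzi
      rw [hdr0, mul_zero, zero_add] at hpde0
      have hd0 := hdb r0 hri z0 hzi
      have hd1 : d r0 z0 ≤ β := (abs_le.mp hd0).2
      have hεE : 0 < ε * (E * l) := by positivity
      have hpdzv : pdz v r0 z0 = -(ε * (E * l)) := by linarith
      have hkey : d r0 z0 * pdz v r0 z0 ≤ β * (ε * (E * l)) := by
        rw [hpdzv]
        nlinarith [hεE, hd1]
      have hfin : ε * (E * l * l) ≤ β * (ε * (E * l)) := by nlinarith [hdrr, hdzz, hpde0, hkey]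
      have hll : l ≤ β := by
        have h4 : ε * (E * l) * l ≤ ε * (E * l) * β := by nlinarith [hfin]
        exact le_of_mul_le_mul_left (by nlinarith [h4]) hεE
      rw [hl] at hll; linarith
    -- boundary estimate
    have hWq0 : W q0 ≤ B + ε * Real.exp l := by
      have hexp : Real.exp (l * q0.2) ≤ Real.exp l := by
        apply Real.exp_le_exp.2
        nlinarith [hq0z.1, hq0z.2, hlpos]
      have hεe : ε * Real.exp (l * q0.2) ≤ ε * Real.exp l :=
        mul_le_mul_of_nonneg_left hexp hε.le
      have hvq0 : v q0.1 q0.2 ≤ B := by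
        rcases Set.eq_endpoints_or_mem_Ioo_of_mem_Icc hq0r with h1 | h1 | h1
        · rw [h1]; exact (hbd1 q0.2 hq0z).1
        · rw [h1]; exact (hbd1 q0.2 hq0z).2
        rcases Set.eq_endpoints_or_mem_Ioo_of_mem_Icc hq0z with h2 | h2 | h2
        · rw [h2]; exact (hbd2 q0.1 hq0r).1
        · rw [h2]; exact (hbd2 q0.1 hq0r).2
        · exact absurd ⟨h1, h2⟩ hbdry
      exact add_le_add hvq0 hεe
    have hrzQ : ((r, z) : ℝ × ℝ) ∈ Q := ⟨hr, hz⟩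
    have hstep : v r z ≤ W (r, z) :=
      le_add_of_nonneg_right (by positivity)
    calc v r z ≤ W (r, z) := hstep
      _ ≤ W q0 := hq0max' (r, z) hrzQ
      _ ≤ B + ε * Real.exp l := hWq0
  by_contra hcon
  push_neg at hcon
  set η := (v r z - B) / (2 * Real.exp l) with hη
  have hηpos : 0 < η := div_pos (by linarith) (by positivity)
  have h2 := key η hηpos
  have h3 : η * Real.exp l = (v r z - B) / 2 := by
    rw [hη]; field_simp
  rw [h3] at h2
  linarith

section gamma
variable {uθ : ℝ → ℝ → ℝ} (huθ : ContDiff ℝ (⊤ : ℕ∞) (fun q : ℝ × ℝ => uθ q.1 q.2))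

lemma gamma_pdr (huθ : ContDiff ℝ (⊤ : ℕ∞) (fun q : ℝ × ℝ => uθ q.1 q.2)) (s z : ℝ) :
    pdr (fun r' z' => r' * uθ r' z') s z = uθ s z + s * pdr uθ s z := by
  have h1 : HasDerivAt (fun s' => s' * uθ s' z) (1 * uθ s z + s * pdr uθ s z) s :=
    (hasDerivAt_id s).mul ((diff_of_contDiff (sliceR_contDiff huθ z) s).hasDerivAt)
  have := h1.deriv
  rw [one_mul] at this
  exact this

lemma gamma_pdrr (s z : ℝ) (huθ : ContDiff ℝ (⊤ : ℕ∞) (fun q : ℝ × ℝ => uθ q.1 q.2)) :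
    pdr (pdr (fun r' z' => r' * uθ r' z')) s z
      = 2 * pdr uθ s z + s * pdr (pdr uθ) s z := by
  have hfun : (fun s' => pdr (fun r' z' => r' * uθ r' z') s' z)
      = fun s' => uθ s' z + s' * pdr uθ s' z := by
    funext s'; exact gamma_pdr huθ s' z
  have hd1 : Differentiable ℝ (fun s' : ℝ => uθ s' z) :=
    diff_of_contDiff (sliceR_contDiff huθ z)
  have hd2 : Differentiable ℝ (deriv (fun s' : ℝ => uθ s' z)) :=
    diff_of_contDiff (deriv_contDiff (sliceR_contDiff huθ z))
  have h2 : HasDerivAt (fun s' => uθ s' z + s' * pdr uθ s' z)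
      (pdr uθ s z + (1 * pdr uθ s z + s * pdr (pdr uθ) s z)) s := by
    have ha : HasDerivAt (fun s' : ℝ => uθ s' z) (pdr uθ s z) s := (hd1 s).hasDerivAt
    have hb : HasDerivAt (fun s' : ℝ => pdr uθ s' z) (pdr (pdr uθ) s z) s :=
      (hd2 s).hasDerivAt
    exact ha.add ((hasDerivAt_id s).mul hb)
  show deriv (fun s' => pdr (fun r' z' => r' * uθ r' z') s' z) s = _
  rw [hfun, h2.deriv]; ring

lemma gamma_pdz (huθ : ContDiff ℝ (⊤ : ℕ∞) (fun q : ℝ × ℝ => uθ q.1 q.2)) (s z : ℝ) :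
    pdz (fun r' z' => r' * uθ r' z') s z = s * pdz uθ s z := by
  show deriv (fun t => s * uθ s t) z = _
  rw [deriv_const_mul s (diff_of_contDiff (sliceZ_contDiff huθ s) z)]
  rfl

lemma gamma_pdzz (s z : ℝ) (huθ : ContDiff ℝ (⊤ : ℕ∞) (fun q : ℝ × ℝ => uθ q.1 q.2)) :
    pdz (pdz (fun r' z' => r' * uθ r' z')) s z = s * pdz (pdz uθ) s z := by
  have hfun : (fun t => pdz (fun r' z' => r' * uθ r' z') s t)
      = fun t => s * pdz uθ s t := by
    funext t; exact gamma_pdz huθ s t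
  have hzslice : ContDiff ℝ (⊤ : ℕ∞) (fun t : ℝ => uθ s t) :=
    huθ.comp (contDiff_const.prodMk contDiff_id)
  have hD : Differentiable ℝ (fun t : ℝ => pdz uθ s t) :=
    diff_of_contDiff (deriv_contDiff hzslice)
  show deriv (fun t => pdz (fun r' z' => r' * uθ r' z') s t) z = _
  rw [hfun, deriv_const_mul s (hD z)]
  rfl

lemma gamma_pde (ur uz : ℝ → ℝ → ℝ)
    (huθ : ContDiff ℝ (⊤ : ℕ∞) (fun q : ℝ × ℝ => uθ q.1 q.2))
    (r z : ℝ) (hrpos : 0 < r)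
    (heq2 : ur r z * pdr uθ r z + uz r z * pdz uθ r z + ur r z * uθ r z / r
        = pdr (pdr uθ) r z + (1 / r) * pdr uθ r z + pdz (pdz uθ) r z - uθ r z / r ^ 2) :
    pdr (pdr (fun r' z' => r' * uθ r' z')) r z + pdz (pdz (fun r' z' => r' * uθ r' z')) r z
      = (1 / r + ur r z) * pdr (fun r' z' => r' * uθ r' z') r z
        + uz r z * pdz (fun r' z' => r' * uθ r' z') r z := by
  rw [gamma_pdrr r z huθ, gamma_pdzz r z huθ, gamma_pdr huθ r z, gamma_pdz huθ r z]
  have hr0 : r ≠ 0 := ne_of_gt hrpos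
  field_simp at heq2 ⊢
  have hc : r ^ 2 * (((ur r z * pdr uθ r z + uz r z * pdz uθ r z) * r + ur r z * uθ r z) * r)
      = r ^ 2 * ((pdr (pdr uθ) r z * r + pdr uθ r z + pdz (pdz uθ) r z * r) * r - uθ r z) := by
    linear_combination r ^ 2 * heq2
  have h7 := mul_left_cancel₀ (pow_ne_zero 2 hr0) hc
  linear_combination -h7

end gamma

section supbound
variable {uθ : ℝ → ℝ → ℝ}

/-- FTC + Cauchy–Schwarz: sup over `z ∈ [0,1]` of `|uθ R z|²` is bounded by the
`L²` norm of `∂_z uθ(R,·)`, given `uθ R 0 = 0`. -/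
lemma sq_le_integral_sq (huθ : ContDiff ℝ (⊤ : ℕ∞) (fun q : ℝ × ℝ => uθ q.1 q.2))
    (R : ℝ) (hbc0 : uθ R 0 = 0) {z : ℝ} (hz : z ∈ Set.Icc (0:ℝ) 1) :
    (uθ R z) ^ 2 ≤ ∫ t in (0:ℝ)..1, (pdz uθ R t) ^ 2 := by
  have hψ : ContDiff ℝ (⊤ : ℕ∞) (fun t : ℝ => uθ R t) :=
    huθ.comp (contDiff_const.prodMk contDiff_id)
  have hg : Continuous (fun t : ℝ => pdz uθ R t) := (deriv_contDiff hψ).continuous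
  -- FTC
  have hftc : ∫ t in (0:ℝ)..z, pdz uθ R t = uθ R z := by
    have h1 : ∀ t ∈ Set.uIcc (0:ℝ) z, HasDerivAt (fun t' : ℝ => uθ R t') (pdz uθ R t) t :=
      fun t _ => (diff_of_contDiff hψ t).hasDerivAt
    rw [intervalIntegral.integral_eq_sub_of_hasDerivAt h1
      (hg.intervalIntegrable 0 z)]
    rw [hbc0, sub_zero]
  have habs : |uθ R z| ≤ ∫ t in (0:ℝ)..1, |pdz uθ R t| := by
    rw [← hftc]
    calc |∫ t in (0:ℝ)..z, pdz uθ R t| ≤ ∫ t in (0:ℝ)..z, |pdz uθ R t| :=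
          intervalIntegral.abs_integral_le_integral_abs hz.1
      _ ≤ ∫ t in (0:ℝ)..1, |pdz uθ R t| := by
          apply intervalIntegral.integral_mono_interval le_rfl hz.1 hz.2
          · exact Filter.Eventually.of_forall (fun t => abs_nonneg _)
          · exact (hg.abs.intervalIntegrable 0 1)
  -- Cauchy–Schwarz via nonneg variance
  set m := ∫ t in (0:ℝ)..1, |pdz uθ R t| with hm
  have hvar : 0 ≤ ∫ t in (0:ℝ)..1, (|pdz uθ R t| - m) ^ 2 := by
    apply intervalIntegral.integral_nonneg zero_le_one
    intro t _; positivity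
  have hexpand : ∫ t in (0:ℝ)..1, (|pdz uθ R t| - m) ^ 2
      = (∫ t in (0:ℝ)..1, (pdz uθ R t) ^ 2) - m ^ 2 := by
    have hi1 : IntervalIntegrable (fun t => (pdz uθ R t) ^ 2) volume 0 1 :=
      (hg.pow 2).intervalIntegrable 0 1
    have hi2 : IntervalIntegrable (fun t => (2 * m) * |pdz uθ R t|) volume 0 1 :=
      (continuous_const.mul hg.abs).intervalIntegrable 0 1
    have hi3 : IntervalIntegrable (fun t => (m:ℝ) ^ 2) volume 0 1 :=
      continuous_const.intervalIntegrable 0 1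
    have hfun : (fun t => (|pdz uθ R t| - m) ^ 2)
        = fun t => ((pdz uθ R t) ^ 2 - (2 * m) * |pdz uθ R t|) + m ^ 2 := by
      funext t
      have := sq_abs (pdz uθ R t)
      nlinarith [this]
    rw [hfun, intervalIntegral.integral_add (hi1.sub hi2) hi3,
      intervalIntegral.integral_sub hi1 hi2,
      intervalIntegral.integral_const_mul, intervalIntegral.integral_const]
    simp [← hm]; ring
  have hm2 : m ^ 2 ≤ ∫ t in (0:ℝ)..1, (pdz uθ R t) ^ 2 := by linarith [hvar, hexpand.symm ▸ hvar]
  calc (uθ R z) ^ 2 = |uθ R z| ^ 2 := (sq_abs _).symm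
    _ ≤ m ^ 2 := by
        apply pow_le_pow_left₀ (abs_nonneg _) habs
    _ ≤ _ := hm2
end supbound

section goodradius
variable {uθ : ℝ → ℝ → ℝ}

lemma pdz_continuous (huθ : ContDiff ℝ (⊤ : ℕ∞) (fun q : ℝ × ℝ => uθ q.1 q.2)) :
    Continuous (fun q : ℝ × ℝ => pdz uθ q.1 q.2) := by
  have hGeq : (fun q : ℝ × ℝ => pdz uθ q.1 q.2)
      = fun q : ℝ × ℝ => fderiv ℝ (fun q' : ℝ × ℝ => uθ q'.1 q'.2) q ((0:ℝ), (1:ℝ)) := by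
    funext q
    have hline : HasDerivAt (fun t : ℝ => ((q.1, t) : ℝ × ℝ)) ((0:ℝ), (1:ℝ)) q.2 :=
      (hasDerivAt_const q.2 q.1).prodMk (hasDerivAt_id q.2)
    have hF : HasFDerivAt (fun q' : ℝ × ℝ => uθ q'.1 q'.2)
        (fderiv ℝ (fun q' : ℝ × ℝ => uθ q'.1 q'.2) q) q :=
      (huθ.differentiable (by simp) q).hasFDerivAt
    have hcomp := hF.comp_hasDerivAt q.2 hline
    exact hcomp.deriv
  rw [hGeq]
  have h1 := huθ.continuous_fderiv_apply (n := (⊤ : ℕ∞)) (by simp)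
  exact h1.comp (continuous_id.prodMk continuous_const)

lemma good_radius (huθ : ContDiff ℝ (⊤ : ℕ∞) (fun q : ℝ × ℝ => uθ q.1 q.2))
    (hfin : ∫⁻ q in Set.Ioi (0:ℝ) ×ˢ Set.Icc (0:ℝ) 1,
      ENNReal.ofReal ((pdz uθ q.1 q.2) ^ 2 * q.1) < ⊤)
    (c M : ℝ) (hc : 0 < c) (hM : 0 < M) :
    ∃ R, M ≤ R ∧ R ^ 2 * ∫ t in (0:ℝ)..1, (pdz uθ R t) ^ 2 < c := by
  by_contra hcon
  push_neg at hcon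
  have hGcont : Continuous (fun q : ℝ × ℝ => pdz uθ q.1 q.2) := pdz_continuous huθ
  have hfcont : Continuous (fun q : ℝ × ℝ => ENNReal.ofReal ((pdz uθ q.1 q.2) ^ 2 * q.1)) :=
    ENNReal.continuous_ofReal.comp ((hGcont.pow 2).mul continuous_fst)
  -- restrict to Ioi M
  have hsub : Set.Ioi M ×ˢ Set.Icc (0:ℝ) 1 ⊆ Set.Ioi (0:ℝ) ×ˢ Set.Icc (0:ℝ) 1 :=
    Set.prod_mono (Set.Ioi_subset_Ioi hM.le) subset_rfl
  have hfin2 : ∫⁻ q in Set.Ioi M ×ˢ Set.Icc (0:ℝ) 1,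
      ENNReal.ofReal ((pdz uθ q.1 q.2) ^ 2 * q.1) < ⊤ :=
    lt_of_le_of_lt (lintegral_mono_set hsub) hfin
  -- Tonelli
  have hprodrw : ∫⁻ q in Set.Ioi M ×ˢ Set.Icc (0:ℝ) 1,
      ENNReal.ofReal ((pdz uθ q.1 q.2) ^ 2 * q.1)
      = ∫⁻ r in Set.Ioi M, ∫⁻ z in Set.Icc (0:ℝ) 1,
          ENNReal.ofReal ((pdz uθ r z) ^ 2 * r) := by
    rw [Measure.volume_eq_prod, ← Measure.prod_restrict,
      MeasureTheory.lintegral_prod _ (hfcont.aemeasurable)]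
  -- pointwise lower bound of the inner integral
  have hlow : ∀ r ∈ Set.Ioi M, ENNReal.ofReal (c * r⁻¹)
      ≤ ∫⁻ z in Set.Icc (0:ℝ) 1, ENNReal.ofReal ((pdz uθ r z) ^ 2 * r) := by
    intro r hr
    have hrpos : 0 < r := lt_trans hM hr
    have hcz : Continuous (fun z => (pdz uθ r z) ^ 2 * r) :=
      (((hGcont.comp (continuous_const.prodMk continuous_id)).pow 2).mul continuous_const)
    have hint : IntegrableOn (fun z => (pdz uθ r z) ^ 2 * r) (Set.Icc (0:ℝ) 1) :=
      hcz.integrableOn_Icc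
    have h0 : 0 ≤ᵐ[volume.restrict (Set.Icc (0:ℝ) 1)] fun z => (pdz uθ r z) ^ 2 * r :=
      Filter.Eventually.of_forall (fun z => by positivity)
    rw [← MeasureTheory.ofReal_integral_eq_lintegral_ofReal hint h0]
    apply ENNReal.ofReal_le_ofReal
    have hIcc : ∫ z in Set.Icc (0:ℝ) 1, (pdz uθ r z) ^ 2 * r
        = (∫ t in (0:ℝ)..1, (pdz uθ r t) ^ 2) * r := by
      rw [MeasureTheory.integral_mul_const]
      congr 1
      rw [MeasureTheory.integral_Icc_eq_integral_Ioc, ← intervalIntegral.integral_of_le zero_le_one]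
    rw [hIcc]
    have h1 := hcon r hr.le
    have h2 : c * r⁻¹ ≤ (r ^ 2 * ∫ t in (0:ℝ)..1, (pdz uθ r t) ^ 2) * r⁻¹ :=
      mul_le_mul_of_nonneg_right h1 (inv_nonneg.2 hrpos.le)
    calc c * r⁻¹ ≤ (r ^ 2 * ∫ t in (0:ℝ)..1, (pdz uθ r t) ^ 2) * r⁻¹ := h2
      _ = (∫ t in (0:ℝ)..1, (pdz uθ r t) ^ 2) * r := by
          field_simp
  -- divergence of ∫ c/r
  have hdiv : ∫⁻ r in Set.Ioi M, ENNReal.ofReal (c * r⁻¹) = ⊤ := by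
    by_contra hne
    have hlt : ∫⁻ r in Set.Ioi M, ENNReal.ofReal (c * r⁻¹) < ⊤ := lt_top_iff_ne_top.2 hne
    have h0 : 0 ≤ᵐ[volume.restrict (Set.Ioi M)] fun r : ℝ => c * r⁻¹ := by
      filter_upwards [ae_restrict_mem measurableSet_Ioi] with r hr
      have hrpos : 0 < r := lt_trans hM hr
      simp only [Pi.zero_apply]
      positivity
    have hintg : IntegrableOn (fun r : ℝ => c * r⁻¹) (Set.Ioi M) :=
      ⟨(measurable_const.mul measurable_inv).aestronglyMeasurable,
        (hasFiniteIntegral_iff_ofReal h0).2 hlt⟩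
    have h1 : IntegrableOn (fun r : ℝ => c⁻¹ * (c * r⁻¹)) (Set.Ioi M) :=
      hintg.const_mul c⁻¹
    have heqon : Set.EqOn (fun r : ℝ => c⁻¹ * (c * r⁻¹)) (fun r : ℝ => r ^ (-1:ℝ))
        (Set.Ioi M) := by
      intro x hx
      have hxpos : 0 < x := lt_trans hM hx
      simp only
      rw [Real.rpow_neg_one]
      field_simp
    have hinv := h1.congr_fun heqon measurableSet_Ioi
    rw [integrableOn_Ioi_rpow_iff hM] at hinv
    linarith
  have hge : (⊤ : ENNReal) ≤ ∫⁻ r in Set.Ioi M, ∫⁻ z in Set.Icc (0:ℝ) 1,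
      ENNReal.ofReal ((pdz uθ r z) ^ 2 * r) := by
    rw [← hdiv]
    refine lintegral_mono_ae ?_
    rw [ae_restrict_iff' measurableSet_Ioi]
    exact Filter.Eventually.of_forall hlow
  rw [← hprodrw] at hge
  exact lt_irrefl _ (lt_of_le_of_lt hge hfin2)

end goodradius

section negation
lemma pdr_neg (f : ℝ → ℝ → ℝ) (r z : ℝ) : pdr (fun a b => -f a b) r z = -pdr f r z := by
  show deriv (fun s => -f s z) r = _
  rw [deriv.fun_neg]
  rfl

lemma pdz_neg (f : ℝ → ℝ → ℝ) (r z : ℝ) : pdz (fun a b => -f a b) r z = -pdz f r z := by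
  show deriv (fun t => -f r t) z = _
  rw [deriv.fun_neg]
  rfl

lemma pdr_pdr_neg (f : ℝ → ℝ → ℝ) (r z : ℝ) :
    pdr (pdr (fun a b => -f a b)) r z = -pdr (pdr f) r z := by
  have h1 : (fun s => pdr (fun a b => -f a b) s z) = fun s => -pdr f s z := by
    funext s; exact pdr_neg f s z
  show deriv (fun s => pdr (fun a b => -f a b) s z) r = _
  rw [h1, deriv.fun_neg]
  rfl

lemma pdz_pdz_neg (f : ℝ → ℝ → ℝ) (r z : ℝ) :
    pdz (pdz (fun a b => -f a b)) r z = -pdz (pdz f) r z := by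
  have h1 : (fun t => pdz (fun a b => -f a b) r t) = fun t => -pdz f r t := by
    funext t; exact pdz_neg f r t
  show deriv (fun t => pdz (fun a b => -f a b) r t) z = _
  rw [h1, deriv.fun_neg]
  rfl
end negation

/-- Core estimate: `r₀ uθ(r₀,z₀) ≤ η` for every `η > 0`, by the maximum principle on
`Γ = r uθ` over `[a,b] × [0,1]` with `a` small and `b` a good radius. -/
lemma gamma_le (ur uθ uz : ℝ → ℝ → ℝ)
    (huθ : ContDiff ℝ (⊤ : ℕ∞) (fun q : ℝ × ℝ => uθ q.1 q.2))
    (huz : Continuous (fun q : ℝ × ℝ => uz q.1 q.2))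
    (hsw : ∀ r : ℝ, 0 < r → ∀ z ∈ Set.Icc (0:ℝ) 1,
      ur r z * pdr uθ r z + uz r z * pdz uθ r z + ur r z * uθ r z / r
        = pdr (pdr uθ) r z + (1 / r) * pdr uθ r z + pdz (pdz uθ) r z - uθ r z / r ^ 2)
    (hbc0 : ∀ r : ℝ, uθ r 0 = 0) (hbc1 : ∀ r : ℝ, uθ r 1 = 0)
    (hfin : ∫⁻ q in Set.Ioi (0:ℝ) ×ˢ Set.Icc (0:ℝ) 1,
      ENNReal.ofReal ((pdz uθ q.1 q.2) ^ 2 * q.1) < ⊤)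
    (r0 z0 η : ℝ) (hr0 : 0 < r0) (hz0 : z0 ∈ Set.Icc (0:ℝ) 1) (hη : 0 < η) :
    r0 * uθ r0 z0 ≤ η := by
  -- bound on |uθ| near the axis
  obtain ⟨C, hC⟩ := (isCompact_Icc.prod isCompact_Icc :
      IsCompact (Set.Icc (0:ℝ) r0 ×ˢ Set.Icc (0:ℝ) 1)).exists_bound_of_continuousOn
      huθ.continuous.continuousOn
  have hC0 : 0 ≤ C := le_trans (norm_nonneg _)
    (hC ((0:ℝ), (0:ℝ)) ⟨⟨le_refl 0, hr0.le⟩, ⟨le_refl 0, zero_le_one⟩⟩)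
  set a := min r0 (η / (C + 1)) with ha
  have hapos : 0 < a := lt_min hr0 (by positivity)
  have har0 : a ≤ r0 := min_le_left _ _
  -- good outer radius
  obtain ⟨b, hbM, hbH⟩ := good_radius huθ hfin (η ^ 2) (r0 + 1) (by positivity) (by positivity)
  have hab : a < b := lt_of_le_of_lt har0 (lt_of_lt_of_le (by linarith) hbM)
  have hr0b : r0 ≤ b := le_trans (by linarith) hbM
  have hbpos : 0 < b := lt_of_le_of_lt hapos.le hab
  -- bound on |uz|
  obtain ⟨β, hβb⟩ := (isCompact_Icc.prod isCompact_Icc :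
      IsCompact (Set.Icc a b ×ˢ Set.Icc (0:ℝ) 1)).exists_bound_of_continuousOn huz.continuousOn
  have hβ0 : 0 ≤ β := le_trans (norm_nonneg _)
    (hβb (a, 0) ⟨⟨le_refl a, hab.le⟩, ⟨le_refl 0, zero_le_one⟩⟩)
  -- boundary bounds
  have hbd1 : ∀ z ∈ Set.Icc (0:ℝ) 1, a * uθ a z ≤ η ∧ b * uθ b z ≤ η := by
    intro z hzI
    constructor
    · have h1 : |uθ a z| ≤ C := by
        have := hC (a, z) ⟨⟨hapos.le, har0⟩, hzI⟩
        simpa [Real.norm_eq_abs] using this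
      have h2 : a ≤ η / (C + 1) := min_le_right _ _
      have h3 : a * uθ a z ≤ a * C :=
        mul_le_mul_of_nonneg_left (le_trans (le_abs_self _) h1) hapos.le
      have h4 : a * C ≤ (η / (C + 1)) * C := mul_le_mul_of_nonneg_right h2 hC0
      have h5 : (η / (C + 1)) * C ≤ η := by
        rw [div_mul_eq_mul_div, div_le_iff₀ (by positivity)]
        nlinarith
      linarith
    · have hHb : (uθ b z) ^ 2 ≤ ∫ t in (0:ℝ)..1, (pdz uθ b t) ^ 2 :=
        sq_le_integral_sq huθ b (hbc0 b) hzI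
      have h3 : (b * uθ b z) ^ 2 < η ^ 2 := by
        have h4 : b ^ 2 * (uθ b z) ^ 2 ≤ b ^ 2 * ∫ t in (0:ℝ)..1, (pdz uθ b t) ^ 2 :=
          mul_le_mul_of_nonneg_left hHb (sq_nonneg b)
        calc (b * uθ b z) ^ 2 = b ^ 2 * (uθ b z) ^ 2 := by ring
          _ ≤ b ^ 2 * ∫ t in (0:ℝ)..1, (pdz uθ b t) ^ 2 := h4
          _ < η ^ 2 := hbH
      nlinarith [h3, hη, sq_nonneg (b * uθ b z - η), sq_nonneg (b * uθ b z + η)]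
  have hbd2 : ∀ r' ∈ Set.Icc a b, r' * uθ r' 0 ≤ η ∧ r' * uθ r' 1 ≤ η := by
    intro r' _
    rw [hbc0 r', hbc1 r', mul_zero]
    exact ⟨hη.le, hη.le⟩
  -- the PDE for Γ
  have hpde : ∀ r' ∈ Set.Ioo a b, ∀ z' ∈ Set.Ioo (0:ℝ) 1,
      pdr (pdr (fun r'' z'' => r'' * uθ r'' z'')) r' z'
        + pdz (pdz (fun r'' z'' => r'' * uθ r'' z'')) r' z'
      = (1 / r' + ur r' z') * pdr (fun r'' z'' => r'' * uθ r'' z'') r' z'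
        + uz r' z' * pdz (fun r'' z'' => r'' * uθ r'' z'') r' z' := by
    intro r' hr' z' hz'
    exact gamma_pde ur uz huθ r' z' (lt_trans hapos hr'.1)
      (hsw r' (lt_trans hapos hr'.1) z' ⟨hz'.1.le, hz'.2.le⟩)
  have hmain := max_principle (fun r'' z'' => r'' * uθ r'' z'')
      (fun r' z' => 1 / r' + ur r' z') uz
      (contDiff_fst.mul huθ) a b η β hab hβ0 hη.le hpde
      (fun r' hr' z' hz' => by
        have := hβb (r', z') ⟨⟨hr'.1.le, hr'.2.le⟩, ⟨hz'.1.le, hz'.2.le⟩⟩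
        simpa [Real.norm_eq_abs] using this)
      hbd1 hbd2
  exact hmain r0 ⟨har0, hr0b⟩ z0 hz0

theorem slab_swirl_vanishing_finite_energy'
    (ur uθ uz p : ℝ → ℝ → ℝ)
    (hur : ContDiff ℝ (⊤ : ℕ∞) (fun q : ℝ × ℝ => ur q.1 q.2))
    (huθ : ContDiff ℝ (⊤ : ℕ∞) (fun q : ℝ × ℝ => uθ q.1 q.2))
    (huz : ContDiff ℝ (⊤ : ℕ∞) (fun q : ℝ × ℝ => uz q.1 q.2))
    (heqsw : ∀ r : ℝ, 0 < r → ∀ z ∈ Set.Icc (0:ℝ) 1,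
      (ur r z * pdr uθ r z + uz r z * pdz uθ r z) + ur r z * uθ r z / r
        = pdr (pdr uθ) r z + (1 / r) * pdr uθ r z + pdz (pdz uθ) r z - uθ r z / r ^ 2)
    (hbc : ∀ r : ℝ, uθ r 0 = 0 ∧ uθ r 1 = 0)
    (hswirl : ∫⁻ q in Set.Ioi (0:ℝ) ×ˢ Set.Icc (0:ℝ) 1,
      ENNReal.ofReal (((pdr uθ q.1 q.2) ^ 2 + (pdz uθ q.1 q.2) ^ 2
        + (uθ q.1 q.2 / q.1) ^ 2) * q.1) < ⊤) :
    ∀ r : ℝ, 0 ≤ r → ∀ z ∈ Set.Icc (0:ℝ) 1, uθ r z = 0 := by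
  -- finite energy of ∂z uθ only
  have hfin : ∫⁻ q in Set.Ioi (0:ℝ) ×ˢ Set.Icc (0:ℝ) 1,
      ENNReal.ofReal ((pdz uθ q.1 q.2) ^ 2 * q.1) < ⊤ := by
    refine lt_of_le_of_lt ?_ hswirl
    apply lintegral_mono_ae
    filter_upwards [ae_restrict_mem (measurableSet_Ioi.prod measurableSet_Icc)] with q hq
    apply ENNReal.ofReal_le_ofReal
    have hq1 : (0:ℝ) < q.1 := hq.1
    nlinarith [sq_nonneg (pdr uθ q.1 q.2), sq_nonneg (uθ q.1 q.2 / q.1), hq1]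
  -- the main interior claim
  have main : ∀ s : ℝ, 0 < s → ∀ z ∈ Set.Icc (0:ℝ) 1, uθ s z = 0 := by
    intro s hs z hz
    have hup : ∀ η : ℝ, 0 < η → s * uθ s z ≤ η := by
      intro η hη
      exact gamma_le ur uθ uz huθ huz.continuous heqsw (fun r => (hbc r).1)
        (fun r => (hbc r).2) hfin s z η hs hz hη
    have hdown : ∀ η : ℝ, 0 < η → -(s * uθ s z) ≤ η := by
      intro η hη
      have hsw' : ∀ r : ℝ, 0 < r → ∀ z' ∈ Set.Icc (0:ℝ) 1,
          ur r z' * pdr (fun a b => -uθ a b) r z' + uz r z' * pdz (fun a b => -uθ a b) r z'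
            + ur r z' * (fun a b => -uθ a b) r z' / r
          = pdr (pdr (fun a b => -uθ a b)) r z'
            + (1 / r) * pdr (fun a b => -uθ a b) r z'
            + pdz (pdz (fun a b => -uθ a b)) r z' - (fun a b => -uθ a b) r z' / r ^ 2 := by
        intro r hr z' hz'
        have h0 := heqsw r hr z' hz'
        rw [pdr_neg, pdz_neg, pdr_pdr_neg, pdz_pdz_neg]
        simp only
        linear_combination -h0
      have hfin' : ∫⁻ q in Set.Ioi (0:ℝ) ×ˢ Set.Icc (0:ℝ) 1,
          ENNReal.ofReal ((pdz (fun a b => -uθ a b) q.1 q.2) ^ 2 * q.1) < ⊤ := by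
        have heqf : (fun q : ℝ × ℝ => ENNReal.ofReal ((pdz (fun a b => -uθ a b) q.1 q.2) ^ 2 * q.1))
            = fun q : ℝ × ℝ => ENNReal.ofReal ((pdz uθ q.1 q.2) ^ 2 * q.1) := by
          funext q
          rw [pdz_neg, neg_sq]
        rw [heqf]
        exact hfin
      have h1 := gamma_le ur (fun a b => -uθ a b) uz huθ.neg huz.continuous hsw'
        (fun r => by simp [(hbc r).1]) (fun r => by simp [(hbc r).2]) hfin' s z η hs hz hη
      simpa using h1
    have h1 : s * uθ s z ≤ 0 := le_of_forall_pos_le_add (fun ε hε => by linarith [hup ε hε])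
    have h2 : -(s * uθ s z) ≤ 0 := le_of_forall_pos_le_add (fun ε hε => by linarith [hdown ε hε])
    have h3 : s * uθ s z = 0 := le_antisymm h1 (by linarith)
    exact (mul_eq_zero.mp h3).resolve_left (ne_of_gt hs)
  intro r hr z hz
  rcases eq_or_lt_of_le hr with h | h
  · -- r = 0 by continuity
    subst h
    have hcont : Continuous (fun s' : ℝ => uθ s' z) :=
      (sliceR_contDiff huθ z).continuous
    have ht1 : Filter.Tendsto (fun s' : ℝ => uθ s' z) (nhdsWithin 0 (Set.Ioi 0))
        (nhds (uθ 0 z)) := (hcont.tendsto 0).mono_left nhdsWithin_le_nhds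
    have ht2 : Filter.Tendsto (fun s' : ℝ => uθ s' z) (nhdsWithin 0 (Set.Ioi 0))
        (nhds 0) := by
      apply Filter.Tendsto.congr' _ tendsto_const_nhds
      filter_upwards [self_mem_nhdsWithin] with s' hs'
      exact (main s' hs' z hz).symm
    exact tendsto_nhds_unique ht1 ht2
  · exact main r h z hz


/-- For a smooth axially symmetric solution of ASNS in the slab
`ℝ² × [0,1]` with Dirichlet boundary conditions and uniform decay at spatial infinity,
if the swirl component has finite Dirichlet energy then the swirl vanishes identically. -/
theorem slab_swirl_vanishing_finite_energy
    (ur uθ uz p : ℝ → ℝ → ℝ)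
    (hur : ContDiff ℝ (⊤ : ℕ∞) (fun q : ℝ × ℝ => ur q.1 q.2))
    (huθ : ContDiff ℝ (⊤ : ℕ∞) (fun q : ℝ × ℝ => uθ q.1 q.2))
    (huz : ContDiff ℝ (⊤ : ℕ∞) (fun q : ℝ × ℝ => uz q.1 q.2))
    (hp : ContDiff ℝ (⊤ : ℕ∞) (fun q : ℝ × ℝ => p q.1 q.2))
    (heq : ASNS ur uθ uz p (Set.Icc 0 1))
    (hbc : ∀ r : ℝ, ur r 0 = 0 ∧ uθ r 0 = 0 ∧ uz r 0 = 0
      ∧ ur r 1 = 0 ∧ uθ r 1 = 0 ∧ uz r 1 = 0)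
    (hdecay : ∀ ε : ℝ, 0 < ε → ∃ R : ℝ, ∀ r : ℝ, R ≤ r → ∀ z ∈ Set.Icc (0:ℝ) 1,
      |ur r z| + |uθ r z| + |uz r z| < ε)
    (hswirl : ∫⁻ q in Set.Ioi (0:ℝ) ×ˢ Set.Icc (0:ℝ) 1,
      ENNReal.ofReal (((pdr uθ q.1 q.2) ^ 2 + (pdz uθ q.1 q.2) ^ 2
        + (uθ q.1 q.2 / q.1) ^ 2) * q.1) < ⊤) :
    ∀ r : ℝ, 0 ≤ r → ∀ z ∈ Set.Icc (0:ℝ) 1, uθ r z = 0 :=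
  slab_swirl_vanishing_finite_energy' ur uθ uz p hur huθ huz
    (fun r hr z hz => (heq r hr z hz).2.1)
    (fun r => ⟨(hbc r).2.1, (hbc r).2.2.2.2.1⟩) hswirl
end

section
/- Let u : ℝ³ → ℝ³ and p : ℝ³ → ℝ be smooth with ∇·u = 0 and (u·∇)u + ∇p − Δu = 0 on ℝ³, and suppose the head pressure Q(x) := |u(x)|²/2 + p(x) satisfies Q(x) → 0 as |x| → ∞. Then Q(x) ≤ 0 for every x ∈ ℝ³. -/
open MeasureTheory

/-- The `i`-th standard basis vector of `ℝ³`. -/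
noncomputable def e3 (i : Fin 3) : EuclideanSpace ℝ (Fin 3) := EuclideanSpace.single i 1

namespace NSaux
abbrev EE := EuclideanSpace ℝ (Fin 3)

lemma topsucc : ((⊤:ℕ∞) : WithTop ℕ∞) + 1 ≤ ((⊤:ℕ∞) : WithTop ℕ∞) := by
  have : ((⊤:ℕ∞) : WithTop ℕ∞) + 1 = ((⊤:ℕ∞) : WithTop ℕ∞) := by norm_cast
  rw [this]

lemma contDiff_dir {f : EE → ℝ} (hf : ContDiff ℝ (⊤:ℕ∞) f) (v : EE) :
    ContDiff ℝ (⊤:ℕ∞) (fun x => fderiv ℝ f x v) :=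
  (hf.fderiv_right topsucc).clm_apply contDiff_const

lemma diff_of_cd {f : EE → ℝ} (hf : ContDiff ℝ (⊤:ℕ∞) f) : Differentiable ℝ f :=
  hf.differentiable (by simp)

-- derivative of a sum of products plus another function
lemma fderiv_spa {f g : Fin 3 → EE → ℝ} {q : EE → ℝ}
    (hf : ∀ i, ContDiff ℝ (⊤:ℕ∞) (f i)) (hg : ∀ i, ContDiff ℝ (⊤:ℕ∞) (g i))
    (hq : ContDiff ℝ (⊤:ℕ∞) q) (x v : EE) :
    fderiv ℝ (fun y => (∑ i, f i y * g i y) + q y) x v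
      = (∑ i, (fderiv ℝ (f i) x v * g i x + f i x * fderiv ℝ (g i) x v)) + fderiv ℝ q x v := by
  have H : HasFDerivAt (fun y => (∑ i, f i y * g i y) + q y)
      ((∑ i, (f i x • fderiv ℝ (g i) x + g i x • fderiv ℝ (f i) x)) + fderiv ℝ q x) x := by
    apply HasFDerivAt.add _ ((diff_of_cd hq x).hasFDerivAt)
    exact HasFDerivAt.fun_sum (fun i _ =>
      ((diff_of_cd (hf i) x).hasFDerivAt).mul ((diff_of_cd (hg i) x).hasFDerivAt))
  rw [H.fderiv]
  simp only [ContinuousLinearMap.add_apply, ContinuousLinearMap.sum_apply,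
    ContinuousLinearMap.smul_apply, smul_eq_mul]
  congr 1
  exact Finset.sum_congr rfl (fun i _ => by ring)

end NSaux

namespace NSaux2
open NSaux

noncomputable def Dd (f : EE → ℝ) (j : Fin 3) : EE → ℝ := fun x => fderiv ℝ f x (e3 j)
noncomputable def Uc (u : EE → EE) (i : Fin 3) : EE → ℝ := fun x => u x i
noncomputable def Qf (u : EE → EE) (p : EE → ℝ) : EE → ℝ :=
  fun y => (∑ i, (1/2 * Uc u i y) * Uc u i y) + p y

lemma Dd_contDiff {f : EE → ℝ} (hf : ContDiff ℝ (⊤:ℕ∞) f) (j : Fin 3) :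
    ContDiff ℝ (⊤:ℕ∞) (Dd f j) := contDiff_dir hf (e3 j)

lemma Uc_contDiff {u : EE → EE} (hu : ContDiff ℝ (⊤:ℕ∞) u) (i : Fin 3) :
    ContDiff ℝ (⊤:ℕ∞) (Uc u i) := (EuclideanSpace.proj (𝕜 := ℝ) i).contDiff.comp hu

lemma Qf_contDiff {u : EE → EE} {p : EE → ℝ} (hu : ContDiff ℝ (⊤:ℕ∞) u)
    (hp : ContDiff ℝ (⊤:ℕ∞) p) : ContDiff ℝ (⊤:ℕ∞) (Qf u p) := by
  unfold Qf
  exact (ContDiff.sum (fun i _ =>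
    (contDiff_const.mul (Uc_contDiff hu i)).mul (Uc_contDiff hu i))).add hp

lemma fderiv_comp_proj {f : EE → EE} {x : EE} (hf : DifferentiableAt ℝ f x) (i : Fin 3) (v : EE) :
    fderiv ℝ (fun x => f x i) x v = fderiv ℝ f x v i := by
  have h := ((EuclideanSpace.proj (𝕜 := ℝ) i).hasFDerivAt.comp x hf.hasFDerivAt).fderiv
  have h2 : (fun x => f x i) = (⇑(EuclideanSpace.proj (𝕜 := ℝ) i)) ∘ f := rfl
  rw [h2, h]; rfl

lemma snd_symm {f : EE → ℝ} (hf : ContDiff ℝ (⊤:ℕ∞) f) (v w : EE) (x : EE) :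
    fderiv ℝ (fun y => fderiv ℝ f y v) x w = fderiv ℝ (fun y => fderiv ℝ f y w) x v := by
  have hsym := (hf.contDiffAt (x := x)).isSymmSndFDerivAt
    (by { have : ((2:ℕ∞) : WithTop ℕ∞) ≤ ((⊤:ℕ∞) : WithTop ℕ∞) := WithTop.coe_le_coe.2 le_top
          simpa using this })
  have hd : DifferentiableAt ℝ (fderiv ℝ f) x :=
    ((hf.fderiv_right topsucc).differentiable
      (by { have : ((1:ℕ∞) : WithTop ℕ∞) ≤ ((⊤:ℕ∞) : WithTop ℕ∞) := WithTop.coe_le_coe.2 le_top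
            simpa using this })).differentiableAt
  have h1 : ∀ z : EE, fderiv ℝ (fun y => fderiv ℝ f y z) x = (fderiv ℝ (fderiv ℝ f) x).flip z := by
    intro z
    rw [show (fun y => fderiv ℝ f y z) = fun y => (fderiv ℝ f y) z from rfl,
      fderiv_clm_apply hd (differentiableAt_const _)]
    ext w'; simp
  rw [h1 v, h1 w]; exact hsym.eq w v

lemma Dd_symm {f : EE → ℝ} (hf : ContDiff ℝ (⊤:ℕ∞) f) (i j : Fin 3) (x : EE) :
    Dd (Dd f i) j x = Dd (Dd f j) i x := by
  unfold Dd
  exact snd_symm hf (e3 i) (e3 j) x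

-- derivative of a sum of functions is the sum of derivatives, when the sum vanishes identically
lemma Dd_sum_zero {g : Fin 3 → EE → ℝ} (hg : ∀ j, ContDiff ℝ (⊤:ℕ∞) (g j))
    (hzero : ∀ y, ∑ j, g j y = 0) (x : EE) (i : Fin 3) :
    ∑ j, Dd (g j) i x = 0 := by
  have h1 : ∑ j, Dd (g j) i x = fderiv ℝ (fun y => ∑ j, g j y) x (e3 i) := by
    rw [fderiv_fun_sum (fun j _ => (diff_of_cd (hg j)).differentiableAt)]
    simp [Dd]
  rw [h1, show (fun y => ∑ j, g j y) = fun _ => (0:ℝ) from funext hzero]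
  simp

section Main
variable {u : EE → EE} {p : EE → ℝ}
variable (hu : ContDiff ℝ (⊤:ℕ∞) u) (hp : ContDiff ℝ (⊤:ℕ∞) p)

include hu in
lemma QA (hp : ContDiff ℝ (⊤:ℕ∞) p) (x : EE) (j : Fin 3) :
    Dd (Qf u p) j x = (∑ i, Uc u i x * Dd (Uc u i) j x) + Dd p j x := by
  unfold Qf Dd
  rw [fderiv_spa (fun i => contDiff_const.mul (Uc_contDiff hu i)) (fun i => Uc_contDiff hu i) hp]
  congr 1
  refine Finset.sum_congr rfl (fun i _ => ?_)
  have : fderiv ℝ (fun y => 1/2 * Uc u i y) x (e3 j) = 1/2 * fderiv ℝ (Uc u i) x (e3 j) := by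
    rw [fderiv_const_mul (diff_of_cd (Uc_contDiff hu i)).differentiableAt]
    simp
  rw [this]; ring

include hu hp in
lemma QB (x : EE) (j : Fin 3) :
    Dd (Dd (Qf u p) j) j x
      = (∑ i, (Dd (Uc u i) j x * Dd (Uc u i) j x + Uc u i x * Dd (Dd (Uc u i) j) j x))
        + Dd (Dd p j) j x := by
  have hrw : Dd (Qf u p) j = fun y => (∑ i, Uc u i y * Dd (Uc u i) j y) + Dd p j y :=
    funext (fun y => QA hu hp y j)
  conv_lhs => rw [show Dd (Dd (Qf u p) j) j x
      = fderiv ℝ (Dd (Qf u p) j) x (e3 j) from rfl, hrw]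
  rw [fderiv_spa (fun i => Uc_contDiff hu i) (fun i => Dd_contDiff (Uc_contDiff hu i) j)
    (Dd_contDiff hp j)]
  rfl

end Main

section Main2
variable {u : EE → EE} {p : EE → ℝ}

lemma NSr (hu : ContDiff ℝ (⊤:ℕ∞) u)
    (hNS : ∀ x, ∀ j : Fin 3,
      (∑ i : Fin 3, u x i * fderiv ℝ u x (e3 i) j)
        + fderiv ℝ p x (e3 j)
        - (∑ i : Fin 3, fderiv ℝ (fun y => fderiv ℝ u y (e3 i) j) x (e3 i)) = 0)
    (x : EE) (j : Fin 3) :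
    Dd p j x = (∑ i, Dd (Dd (Uc u j) i) i x) - ∑ i, Uc u i x * Dd (Uc u j) i x := by
  have h := hNS x j
  have h1 : ∀ i : Fin 3, ∀ y : EE, fderiv ℝ u y (e3 i) j = Dd (Uc u j) i y := by
    intro i y
    exact (fderiv_comp_proj ((hu.differentiable (by simp)).differentiableAt) j (e3 i)).symm
  have h2 : ∀ i : Fin 3, fderiv ℝ (fun y => fderiv ℝ u y (e3 i) j) x (e3 i)
      = Dd (Dd (Uc u j) i) i x := by
    intro i
    rw [show (fun y => fderiv ℝ u y (e3 i) j) = Dd (Uc u j) i from funext (fun y => h1 i y)]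
    rfl
  simp only [h1] at h
  have h3 : ∀ i : Fin 3, (fderiv ℝ (fun y => Dd (Uc u j) i y) x) (e3 i)
      = Dd (Dd (Uc u j) i) i x := fun i => rfl
  simp only [h3] at h
  have h4 : (∑ i : Fin 3, Uc u i x * Dd (Uc u j) i x) + Dd p j x
      - ∑ i : Fin 3, Dd (Dd (Uc u j) i) i x = 0 := h
  linarith [h4]

end Main2

section Main3
variable {u : EE → EE} {p : EE → ℝ}

lemma NSd (hu : ContDiff ℝ (⊤:ℕ∞) u) (hp : ContDiff ℝ (⊤:ℕ∞) p)
    (hNS : ∀ x, ∀ j : Fin 3,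
      (∑ i : Fin 3, u x i * fderiv ℝ u x (e3 i) j)
        + fderiv ℝ p x (e3 j)
        - (∑ i : Fin 3, fderiv ℝ (fun y => fderiv ℝ u y (e3 i) j) x (e3 i)) = 0)
    (x : EE) (j : Fin 3) :
    Dd (Dd p j) j x = (∑ i, Dd (Dd (Dd (Uc u j) i) i) j x)
      - ∑ i, (Dd (Uc u i) j x * Dd (Uc u j) i x + Uc u i x * Dd (Dd (Uc u j) i) j x) := by
  have hrw : Dd p j = fun y => (∑ i, (-(Uc u i y)) * Dd (Uc u j) i y)
      + (∑ i, Dd (Dd (Uc u j) i) i y) := by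
    funext y
    rw [NSr hu hNS y j]
    rw [sub_eq_add_neg, ← Finset.sum_neg_distrib, add_comm]
    congr 1
    exact Finset.sum_congr rfl (fun i _ => by ring)
  have hdq : ∀ i : Fin 3, ContDiff ℝ (⊤:ℕ∞) (Dd (Dd (Uc u j) i) i) :=
    fun i => Dd_contDiff (Dd_contDiff (Uc_contDiff hu j) i) i
  conv_lhs => rw [show Dd (Dd p j) j x = fderiv ℝ (Dd p j) x (e3 j) from rfl, hrw]
  have hsum : HasFDerivAt (fun y => ∑ i : Fin 3, Dd (Dd (Uc u j) i) i y)
      (∑ i : Fin 3, fderiv ℝ (Dd (Dd (Uc u j) i) i) x) x :=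
    HasFDerivAt.fun_sum (fun i _ => (diff_of_cd (hdq i) x).hasFDerivAt)
  rw [fderiv_spa (fun i => (Uc_contDiff hu i).neg) (fun i => Dd_contDiff (Uc_contDiff hu j) i)
    (ContDiff.sum (fun i _ => hdq i))]
  have h1 : ∀ i : Fin 3, fderiv ℝ (fun y => -(Uc u i y)) x (e3 j)
      = -(Dd (Uc u i) j x) := by
    intro i
    rw [fderiv_fun_neg]
    rfl
  have h2 : fderiv ℝ (fun y => ∑ i : Fin 3, Dd (Dd (Uc u j) i) i y) x (e3 j)
      = ∑ i : Fin 3, Dd (Dd (Dd (Uc u j) i) i) j x := by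
    rw [hsum.fderiv]
    simp only [ContinuousLinearMap.sum_apply]
    rfl
  simp only [h1, h2]
  rw [add_comm]
  congr 1
  rw [← Finset.sum_neg_distrib]
  refine Finset.sum_congr rfl (fun i _ => ?_)
  show -(Dd (Uc u i) j x) * Dd (Uc u j) i x + -(Uc u i x) * Dd (Dd (Uc u j) i) j x = _
  ring

lemma div0 (hu : ContDiff ℝ (⊤:ℕ∞) u)
    (hdiv : ∀ x, (∑ i : Fin 3, fderiv ℝ u x (e3 i) i) = 0) (y : EE) :
    ∑ j, Dd (Uc u j) j y = 0 := by
  have h := hdiv y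
  have h1 : ∀ i : Fin 3, fderiv ℝ u y (e3 i) i = Dd (Uc u i) i y := fun i =>
    (fderiv_comp_proj ((hu.differentiable (by simp)).differentiableAt)
      i (e3 i)).symm
  simp only [h1] at h
  exact h

lemma div1 (hu : ContDiff ℝ (⊤:ℕ∞) u)
    (hdiv : ∀ x, (∑ i : Fin 3, fderiv ℝ u x (e3 i) i) = 0) (x : EE) (i : Fin 3) :
    ∑ j, Dd (Dd (Uc u j) j) i x = 0 :=
  Dd_sum_zero (fun j => Dd_contDiff (Uc_contDiff hu j) j) (div0 hu hdiv) x i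

lemma div2 (hu : ContDiff ℝ (⊤:ℕ∞) u)
    (hdiv : ∀ x, (∑ i : Fin 3, fderiv ℝ u x (e3 i) i) = 0) (x : EE) (i : Fin 3) :
    ∑ j, Dd (Dd (Uc u j) i) j x = 0 := by
  have h1 : ∀ j : Fin 3, Dd (Dd (Uc u j) i) j x = Dd (Dd (Uc u j) j) i x :=
    fun j => Dd_symm (Uc_contDiff hu j) i j x
  simp only [h1]
  exact div1 hu hdiv x i

lemma div3 (hu : ContDiff ℝ (⊤:ℕ∞) u)
    (hdiv : ∀ x, (∑ i : Fin 3, fderiv ℝ u x (e3 i) i) = 0) (x : EE) (i : Fin 3) :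
    ∑ j, Dd (Dd (Dd (Uc u j) i) i) j x = 0 := by
  have h1 : ∀ j : Fin 3, Dd (Dd (Dd (Uc u j) i) i) j x = Dd (Dd (Dd (Uc u j) i) j) i x :=
    fun j => Dd_symm (Dd_contDiff (Uc_contDiff hu j) i) i j x
  simp only [h1]
  exact Dd_sum_zero (fun j => Dd_contDiff (Dd_contDiff (Uc_contDiff hu j) i) j)
    (fun y => div2 hu hdiv y i) x i

end Main3

section Main4
variable {u : EE → EE} {p : EE → ℝ}

lemma main_ineq (hu : ContDiff ℝ (⊤:ℕ∞) u) (hp : ContDiff ℝ (⊤:ℕ∞) p)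
    (hdiv : ∀ x, (∑ i : Fin 3, fderiv ℝ u x (e3 i) i) = 0)
    (hNS : ∀ x, ∀ j : Fin 3,
      (∑ i : Fin 3, u x i * fderiv ℝ u x (e3 i) j)
        + fderiv ℝ p x (e3 j)
        - (∑ i : Fin 3, fderiv ℝ (fun y => fderiv ℝ u y (e3 i) j) x (e3 i)) = 0)
    (z : EE) :
    ∑ j, Uc u j z * Dd (Qf u p) j z ≤ ∑ j, Dd (Dd (Qf u p) j) j z := by
  have hQA : ∀ j : Fin 3, Dd (Qf u p) j z
      = (∑ i, Uc u i z * Dd (Uc u i) j z) + Dd p j z := fun j => QA hu hp z j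
  have hQB : ∀ j : Fin 3, Dd (Dd (Qf u p) j) j z
      = (∑ i, (Dd (Uc u i) j z * Dd (Uc u i) j z + Uc u i z * Dd (Dd (Uc u i) j) j z))
        + Dd (Dd p j) j z := fun j => QB hu hp z j
  have hNSr : ∀ j : Fin 3, Dd p j z
      = (∑ i, Dd (Dd (Uc u j) i) i z) - ∑ i, Uc u i z * Dd (Uc u j) i z :=
    fun j => NSr hu hNS z j
  have hNSd : ∀ j : Fin 3, Dd (Dd p j) j z = (∑ i, Dd (Dd (Dd (Uc u j) i) i) j z)
      - ∑ i, (Dd (Uc u i) j z * Dd (Uc u j) i z + Uc u i z * Dd (Dd (Uc u j) i) j z) :=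
    fun j => NSd hu hp hNS z j
  have keyU : ∀ i : Fin 3, Uc u i z * (∑ j, Dd (Dd (Uc u j) i) j z) = 0 :=
    fun i => by rw [div2 hu hdiv z i]; ring
  have E : (∑ j, Dd (Dd (Qf u p) j) j z) - (∑ j, Uc u j z * Dd (Qf u p) j z)
      = (∑ j : Fin 3, ∑ i : Fin 3, Dd (Uc u i) j z * Dd (Uc u i) j z)
        - (∑ j : Fin 3, ∑ i : Fin 3, Dd (Uc u i) j z * Dd (Uc u j) i z) := by
    have k0 := keyU 0; have k1 := keyU 1; have k2 := keyU 2
    have d30 := div3 hu hdiv z 0; have d31 := div3 hu hdiv z 1; have d32 := div3 hu hdiv z 2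
    simp only [Fin.sum_univ_three] at k0 k1 k2 d30 d31 d32
    simp only [hQB, hNSd, hQA, hNSr, Fin.sum_univ_three]
    linear_combination d30 + d31 + d32 - k0 - k1 - k2
  have hfin : 0 ≤ (∑ j : Fin 3, ∑ i : Fin 3, Dd (Uc u i) j z * Dd (Uc u i) j z)
      - (∑ j : Fin 3, ∑ i : Fin 3, Dd (Uc u i) j z * Dd (Uc u j) i z) := by
    simp only [Fin.sum_univ_three]
    nlinarith [sq_nonneg (Dd (Uc u 0) 1 z - Dd (Uc u 1) 0 z),
      sq_nonneg (Dd (Uc u 0) 2 z - Dd (Uc u 2) 0 z),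
      sq_nonneg (Dd (Uc u 1) 2 z - Dd (Uc u 2) 1 z)]
  linarith [E, hfin]

end Main4
end NSaux2

namespace NSaux3
open NSaux NSaux2

lemma second_deriv_test {g : ℝ → ℝ} (hg : ContDiff ℝ (⊤:ℕ∞) g) (hmax : IsLocalMax g 0) :
    deriv (deriv g) 0 ≤ 0 := by
  by_contra hc
  push_neg at hc
  set h := deriv g with hh
  have hgd : Differentiable ℝ g := hg.differentiable (by simp)
  have hhc : ContDiff ℝ (⊤:ℕ∞) h := by
    have h1 : ContDiff ℝ ((⊤:ℕ∞) + 1) g := hg.of_le (by norm_cast)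
    exact (contDiff_succ_iff_deriv.1 h1).2.2
  have h0 : h 0 = 0 := hmax.deriv_eq_zero
  have hd : HasDerivAt h (deriv h 0) 0 :=
    ((hhc.differentiable (by simp)) 0).hasDerivAt
  have hslope : Filter.Tendsto (slope h 0) (nhdsWithin 0 {(0:ℝ)}ᶜ) (nhds (deriv h 0)) :=
    hasDerivAt_iff_tendsto_slope.1 hd
  have hev : ∀ᶠ t in nhdsWithin 0 (Set.Ioi 0), 0 < h t := by
    have h1 : ∀ᶠ t in nhdsWithin 0 {(0:ℝ)}ᶜ, 0 < slope h 0 t :=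
      hslope.eventually (eventually_gt_nhds hc)
    have h2 : ∀ᶠ t in nhdsWithin 0 (Set.Ioi 0), 0 < slope h 0 t :=
      h1.filter_mono (nhdsWithin_mono _ (fun t ht => ne_of_gt ht))
    filter_upwards [h2, self_mem_nhdsWithin] with t ht ht'
    have htpos : (0:ℝ) < t := ht'
    rw [slope_def_field, h0] at ht
    rcases div_pos_iff.mp (by simpa [h0] using ht) with ⟨h1, _⟩ | ⟨_, h2⟩
    · exact h1
    · linarith
  obtain ⟨ε, hε, hIoo⟩ := mem_nhdsGT_iff_exists_Ioo_subset.1 hev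
  obtain ⟨δ, hδ, hball⟩ := Metric.eventually_nhds_iff.1 hmax
  set ε' := min ε δ with hε'
  have hε'pos : 0 < ε' := lt_min hε hδ
  have hmono : StrictMonoOn g (Set.Icc 0 (ε'/2)) := by
    apply strictMonoOn_of_deriv_pos (convex_Icc _ _) (hgd.continuous.continuousOn)
    intro t ht
    rw [interior_Icc] at ht
    refine hIoo ⟨ht.1, ?_⟩
    have h1 : t < ε'/2 := ht.2
    have h2 : ε' ≤ ε := min_le_left _ _
    linarith
  have h1 : g 0 < g (ε'/2) :=
    hmono ⟨le_rfl, by linarith⟩ ⟨by linarith, le_rfl⟩ (by linarith)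
  have h2 : g (ε'/2) ≤ g 0 := by
    apply hball
    simp only [Real.dist_eq, sub_zero]
    rw [abs_of_pos (by linarith)]
    have := min_le_right ε δ
    linarith
  linarith

lemma line_deriv {F : EE → ℝ} (hF : ContDiff ℝ (⊤:ℕ∞) F) (z v : EE) (t₀ : ℝ) :
    HasDerivAt (fun t : ℝ => F (z + t • v)) (fderiv ℝ F (z + t₀ • v) v) t₀ := by
  have hL : HasDerivAt (fun t : ℝ => z + t • v) v t₀ := by
    simpa using ((hasDerivAt_id t₀).smul_const v).const_add z
  exact (((hF.differentiable (by simp)) _).hasFDerivAt).comp_hasDerivAt t₀ hL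

lemma line_contDiff {F : EE → ℝ} (hF : ContDiff ℝ (⊤:ℕ∞) F) (z v : EE) :
    ContDiff ℝ (⊤:ℕ∞) (fun t : ℝ => F (z + t • v)) :=
  hF.comp (contDiff_const.add (contDiff_id.smul contDiff_const))

lemma second_deriv_line {F : EE → ℝ} (hF : ContDiff ℝ (⊤:ℕ∞) F) (z v : EE) :
    deriv (deriv (fun t : ℝ => F (z + t • v))) 0
      = fderiv ℝ (fun y => fderiv ℝ F y v) z v := by
  have h1 : deriv (fun t : ℝ => F (z + t • v)) = fun t => fderiv ℝ F (z + t • v) v := by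
    funext t; exact (line_deriv hF z v t).deriv
  rw [h1]
  have h2 := (line_deriv (contDiff_dir hF v) z v 0).deriv
  simpa using h2

lemma max_D1 {F : EE → ℝ} {z : EE} (hmax : IsLocalMax F z) (j : Fin 3) :
    Dd F j z = 0 := by
  have := hmax.fderiv_eq_zero
  show fderiv ℝ F z (e3 j) = 0
  rw [this]; rfl

lemma max_D2 {F : EE → ℝ} (hF : ContDiff ℝ (⊤:ℕ∞) F) {z : EE} (hmax : IsLocalMax F z)
    (j : Fin 3) : Dd (Dd F j) j z ≤ 0 := by
  have hloc : IsLocalMax (fun t : ℝ => F (z + t • (e3 j))) 0 := by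
    have : IsLocalMax (F ∘ fun t : ℝ => z + t • (e3 j)) 0 := by
      apply IsLocalMax.comp_continuous (g := fun t : ℝ => z + t • (e3 j)) (b := (0:ℝ))
      · simpa using hmax
      · exact (continuous_const.add (continuous_id.smul continuous_const)).continuousAt
    exact this
  have := second_deriv_test (line_contDiff hF z (e3 j)) hloc
  rwa [second_deriv_line hF z (e3 j)] at this

lemma coord_abs_le (y : EE) (i : Fin 3) : |y i| ≤ ‖y‖ := by
  rw [EuclideanSpace.norm_eq, show |y i| = Real.sqrt ((y i)^2) from (Real.sqrt_sq_eq_abs _).symm]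
  apply Real.sqrt_le_sqrt
  have h1 : (y i)^2 = ‖y i‖^2 := by simp [Real.norm_eq_abs, sq_abs]
  rw [h1]
  exact Finset.single_le_sum (fun j _ => sq_nonneg ‖y j‖) (Finset.mem_univ i)

lemma norm_sq_eq (y : EE) : ‖y‖^2 = ∑ i, (y i)^2 := by
  rw [EuclideanSpace.norm_eq, Real.sq_sqrt (Finset.sum_nonneg (fun j _ => sq_nonneg ‖y j‖))]
  exact Finset.sum_congr rfl (fun j _ => by simp [Real.norm_eq_abs, sq_abs])

end NSaux3

namespace NSaux4
open NSaux NSaux2 NSaux3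

lemma e3_app (j i : Fin 3) : (e3 j) i = if i = j then 1 else 0 := by
  unfold e3
  rw [EuclideanSpace.single_apply]

lemma phi_hasFDeriv (lam : ℝ) (x : EE) :
    HasFDerivAt (fun y : EE => Real.exp (lam * y 0))
      ((lam * Real.exp (lam * x 0)) • (EuclideanSpace.proj (𝕜 := ℝ) (0 : Fin 3))) x := by
  have h1 : HasFDerivAt (fun y : EE => lam * y 0)
      (lam • (EuclideanSpace.proj (𝕜 := ℝ) (0 : Fin 3))) x :=
    ((EuclideanSpace.proj (𝕜 := ℝ) (0 : Fin 3)).hasFDerivAt).const_mul lam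
  have h2 := h1.exp
  have h3 : (lam * Real.exp (lam * x 0)) • (EuclideanSpace.proj (𝕜 := ℝ) (0 : Fin 3))
      = Real.exp (lam * x 0) • lam • (EuclideanSpace.proj (𝕜 := ℝ) (0 : Fin 3)) := by
    rw [smul_smul, mul_comm]
  rw [h3]
  exact h2

lemma phi_contDiff (lam : ℝ) : ContDiff ℝ (⊤:ℕ∞) (fun y : EE => Real.exp (lam * y 0)) := by
  apply Real.contDiff_exp.comp
  exact contDiff_const.mul ((EuclideanSpace.proj (𝕜 := ℝ) (0 : Fin 3)).contDiff)

lemma phi_D (lam : ℝ) (x : EE) (j : Fin 3) :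
    Dd (fun y : EE => Real.exp (lam * y 0)) j x
      = (lam * (e3 j) 0) * Real.exp (lam * x 0) := by
  show fderiv ℝ (fun y : EE => Real.exp (lam * y 0)) x (e3 j) = _
  rw [(phi_hasFDeriv lam x).fderiv]
  simp only [ContinuousLinearMap.smul_apply, smul_eq_mul]
  have : (EuclideanSpace.proj (𝕜 := ℝ) (0 : Fin 3)) (e3 j) = e3 j 0 := rfl
  rw [this]; ring

lemma phi_DD (lam : ℝ) (x : EE) (j : Fin 3) :
    Dd (Dd (fun y : EE => Real.exp (lam * y 0)) j) j x
      = (lam * (e3 j) 0)^2 * Real.exp (lam * x 0) := by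
  have hrw : Dd (fun y : EE => Real.exp (lam * y 0)) j
      = fun y => (lam * (e3 j) 0) * Real.exp (lam * y 0) := funext (fun y => phi_D lam y j)
  show fderiv ℝ (Dd (fun y : EE => Real.exp (lam * y 0)) j) x (e3 j) = _
  rw [hrw, fderiv_const_mul (phi_hasFDeriv lam x).differentiableAt]
  have : fderiv ℝ (fun y : EE => Real.exp (lam * y 0)) x (e3 j)
      = (lam * (e3 j) 0) * Real.exp (lam * x 0) := phi_D lam x j
  simp only [ContinuousLinearMap.smul_apply, smul_eq_mul]
  rw [this]
  ring

lemma Dd_add_const_mul {f g : EE → ℝ} (hf : ContDiff ℝ (⊤:ℕ∞) f) (hg : ContDiff ℝ (⊤:ℕ∞) g)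
    (c : ℝ) (j : Fin 3) (x : EE) :
    Dd (fun y => f y + c * g y) j x = Dd f j x + c * Dd g j x := by
  show fderiv ℝ (fun y => f y + c * g y) x (e3 j) = _
  rw [fderiv_fun_add (diff_of_cd hf).differentiableAt
    (((diff_of_cd hg).differentiableAt).const_mul c),
    fderiv_const_mul (diff_of_cd hg).differentiableAt]
  simp only [ContinuousLinearMap.add_apply, ContinuousLinearMap.smul_apply, smul_eq_mul]
  rfl

lemma Dd2_add_const_mul {f g : EE → ℝ} (hf : ContDiff ℝ (⊤:ℕ∞) f) (hg : ContDiff ℝ (⊤:ℕ∞) g)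
    (c : ℝ) (j : Fin 3) (x : EE) :
    Dd (Dd (fun y => f y + c * g y) j) j x = Dd (Dd f j) j x + c * Dd (Dd g j) j x := by
  have hrw : Dd (fun y => f y + c * g y) j = fun y => Dd f j y + c * Dd g j y :=
    funext (fun y => Dd_add_const_mul hf hg c j y)
  rw [show Dd (Dd (fun y => f y + c * g y) j) j x
    = fderiv ℝ (Dd (fun y => f y + c * g y) j) x (e3 j) from rfl, hrw]
  exact Dd_add_const_mul (Dd_contDiff hf j) (Dd_contDiff hg j) c j x

end NSaux4


open NSaux NSaux2 NSaux3 NSaux4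

/-- For a smooth solution of the steady Navier–Stokes equations on `ℝ³`,
if the head pressure `Q = |u|²/2 + p` tends to `0` at infinity, then `Q ≤ 0` everywhere. -/
theorem head_pressure_nonpositive
    (u : EuclideanSpace ℝ (Fin 3) → EuclideanSpace ℝ (Fin 3))
    (p : EuclideanSpace ℝ (Fin 3) → ℝ)
    (hu : ContDiff ℝ (⊤ : ℕ∞) u) (hp : ContDiff ℝ (⊤ : ℕ∞) p)
    (hdiv : ∀ x, (∑ i : Fin 3, fderiv ℝ u x (e3 i) i) = 0)
    (hNS : ∀ x, ∀ j : Fin 3,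
      (∑ i : Fin 3, u x i * fderiv ℝ u x (e3 i) j)
        + fderiv ℝ p x (e3 j)
        - (∑ i : Fin 3, fderiv ℝ (fun y => fderiv ℝ u y (e3 i) j) x (e3 i)) = 0)
    (hQ0 : Filter.Tendsto (fun x => ‖u x‖ ^ 2 / 2 + p x)
      (Filter.cocompact (EuclideanSpace ℝ (Fin 3))) (nhds 0)) :
    ∀ x, ‖u x‖ ^ 2 / 2 + p x ≤ 0 := by
  intro x₀
  by_contra hneg
  push_neg at hneg
  have hQeq : ∀ x, Qf u p x = ‖u x‖ ^ 2 / 2 + p x := by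
    intro x
    unfold Qf Uc
    rw [norm_sq_eq (u x)]
    have : (∑ i, (1/2 * u x i) * u x i) = (∑ i, (u x i)^2)/2 := by
      rw [Finset.sum_div]
      exact Finset.sum_congr rfl (fun i _ => by ring)
    rw [this]
  obtain ⟨M, hMdef⟩ : ∃ M : ℝ, M = ‖u x₀‖ ^ 2 / 2 + p x₀ := ⟨_, rfl⟩
  have hM : 0 < M := by rw [hMdef]; exact hneg
  -- compact set outside of which |Q| < M/2
  have hev := Metric.tendsto_nhds.1 hQ0 (M/2) (by linarith)
  rw [Filter.eventually_iff, Filter.mem_cocompact] at hev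
  obtain ⟨K, hK, hKsub⟩ := hev
  obtain ⟨r, hr⟩ := hK.isBounded.subset_closedBall 0
  obtain ⟨R, hRdef⟩ : ∃ R : ℝ, R = max (r+1) (‖x₀‖+1) := ⟨_, rfl⟩
  have hRr : r < R := by rw [hRdef]; exact lt_of_lt_of_le (by linarith) (le_max_left _ _)
  have hRx : ‖x₀‖ < R := by rw [hRdef]; exact lt_of_lt_of_le (by linarith) (le_max_right _ _)
  obtain ⟨C0, hC0⟩ := (isCompact_closedBall (0:EE) R).exists_bound_of_continuousOn
    hu.continuous.continuousOn
  obtain ⟨C, hCdef⟩ : ∃ C : ℝ, C = max C0 0 := ⟨_, rfl⟩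
  have hCnn : (0:ℝ) ≤ C := by rw [hCdef]; exact le_max_right _ _
  have hC0C : C0 ≤ C := by rw [hCdef]; exact le_max_left _ _
  obtain ⟨lam, hlamdef⟩ : ∃ lam : ℝ, lam = C + 1 := ⟨_, rfl⟩
  have hlam : 0 < lam := by rw [hlamdef]; linarith
  obtain ⟨ε, hεdef⟩ : ∃ e : ℝ, e = (M/8) / Real.exp (lam * R) := ⟨_, rfl⟩
  have hε : 0 < ε := by rw [hεdef]; exact div_pos (by linarith) (Real.exp_pos _)
  have hεR : ε * Real.exp (lam * R) = M/8 := by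
    rw [hεdef]; exact div_mul_cancel₀ _ (ne_of_gt (Real.exp_pos _))
  -- the perturbed function F
  have hφc : ContDiff ℝ (⊤:ℕ∞) (fun y : EE => Real.exp (lam * y 0)) := phi_contDiff lam
  have hQc : ContDiff ℝ (⊤:ℕ∞) (Qf u p) := Qf_contDiff hu hp
  have hFc : ContDiff ℝ (⊤:ℕ∞) (fun y : EE => Qf u p y + ε * Real.exp (lam * y 0)) :=
    hQc.add (contDiff_const.mul hφc)
  have hx₀mem : x₀ ∈ Metric.closedBall (0:EE) R := by
    rw [Metric.mem_closedBall, dist_zero_right]; linarith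
  obtain ⟨z, hzmem, hzmax⟩ := (isCompact_closedBall (0:EE) R).exists_isMaxOn ⟨x₀, hx₀mem⟩
    hFc.continuous.continuousOn
  have hznorm : ‖z‖ ≤ R := by
    rw [Metric.mem_closedBall, dist_zero_right] at hzmem; exact hzmem
  have hz0R : z 0 ≤ R := le_trans (le_trans (le_abs_self _) (coord_abs_le z 0)) hznorm
  -- z is in the open ball
  have hzlt : ‖z‖ < R := by
    rcases lt_or_eq_of_le hznorm with h | h
    · exact h
    · exfalso
      have hzK : z ∉ K := by
        intro hzK
        have := hr hzK
        rw [Metric.mem_closedBall, dist_zero_right] at this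
        linarith
      have hQz : |‖u z‖ ^ 2 / 2 + p z| < M/2 := by
        have := hKsub hzK
        simpa [Real.dist_eq] using this
      have h1 : (fun y : EE => Qf u p y + ε * Real.exp (lam * y 0)) x₀
          ≤ (fun y : EE => Qf u p y + ε * Real.exp (lam * y 0)) z := hzmax hx₀mem
      simp only at h1
      rw [hQeq x₀, hQeq z] at h1
      have h2 : ε * Real.exp (lam * x₀ 0) > 0 := mul_pos hε (Real.exp_pos _)
      have h3 : Real.exp (lam * z 0) ≤ Real.exp (lam * R) :=
        Real.exp_le_exp.2 (mul_le_mul_of_nonneg_left hz0R (le_of_lt hlam))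
      have h4 : ε * Real.exp (lam * z 0) ≤ M/8 := by
        calc ε * Real.exp (lam * z 0) ≤ ε * Real.exp (lam * R) :=
          mul_le_mul_of_nonneg_left h3 (le_of_lt hε)
        _ = M/8 := hεR
      have h5 : ‖u z‖ ^ 2 / 2 + p z < M/2 := lt_of_le_of_lt (le_abs_self _) hQz
      linarith [hMdef]
  have hloc : IsLocalMax (fun y : EE => Qf u p y + ε * Real.exp (lam * y 0)) z := by
    apply hzmax.isLocalMax
    exact Filter.mem_of_superset
      (Metric.isOpen_ball.mem_nhds (by rw [Metric.mem_ball, dist_zero_right]; exact hzlt))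
      Metric.ball_subset_closedBall
  have hexz : 0 < Real.exp (lam * z 0) := Real.exp_pos _
  -- first and second derivative info at z
  have hD1 : ∀ j : Fin 3, Dd (Qf u p) j z
      = -(ε * ((lam * (e3 j) 0) * Real.exp (lam * z 0))) := by
    intro j
    have h0 : Dd (fun y : EE => Qf u p y + ε * Real.exp (lam * y 0)) j z = 0 := max_D1 hloc j
    have hdec : Dd (fun y : EE => Qf u p y + ε * Real.exp (lam * y 0)) j z
        = Dd (Qf u p) j z + ε * Dd (fun y : EE => Real.exp (lam * y 0)) j z :=
      Dd_add_const_mul hQc hφc ε j z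
    rw [hdec, phi_D lam z j] at h0
    linarith
  have hD2 : ∀ j : Fin 3, Dd (Dd (Qf u p) j) j z
      ≤ -(ε * ((lam * (e3 j) 0)^2 * Real.exp (lam * z 0))) := by
    intro j
    have h0 : Dd (Dd (fun y : EE => Qf u p y + ε * Real.exp (lam * y 0)) j) j z ≤ 0 :=
      max_D2 hFc hloc j
    have hdec : Dd (Dd (fun y : EE => Qf u p y + ε * Real.exp (lam * y 0)) j) j z
        = Dd (Dd (Qf u p) j) j z + ε * Dd (Dd (fun y : EE => Real.exp (lam * y 0)) j) j z :=
      Dd2_add_const_mul hQc hφc ε j z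
    rw [hdec, phi_DD lam z j] at h0
    linarith
  -- the PDE inequality at z
  have hmain := main_ineq hu hp hdiv hNS z
  -- evaluate the basis coordinates
  have he0 : (e3 (0 : Fin 3)) 0 = 1 := by rw [e3_app, if_pos rfl]
  have he1 : (e3 (1 : Fin 3)) 0 = 0 := by rw [e3_app, if_neg (by decide)]
  have he2 : (e3 (2 : Fin 3)) 0 = 0 := by rw [e3_app, if_neg (by decide)]
  have hu0 : u z 0 ≤ C := by
    have h1 : ‖u z‖ ≤ C0 := hC0 z (by rw [Metric.mem_closedBall, dist_zero_right]; linarith)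
    have h2 : |u z 0| ≤ ‖u z‖ := coord_abs_le (u z) 0
    have h3 := le_abs_self (u z 0)
    linarith
  -- expand the sums and conclude
  rw [Fin.sum_univ_three, Fin.sum_univ_three] at hmain
  rw [hD1 0, hD1 1, hD1 2, he0, he1, he2] at hmain
  have hb0 := hD2 0; have hb1 := hD2 1; have hb2 := hD2 2
  rw [he0] at hb0; rw [he1] at hb1; rw [he2] at hb2
  have hU0 : Uc u 0 z = u z 0 := rfl
  have hU1 : Uc u 1 z = u z 1 := rfl
  have hU2 : Uc u 2 z = u z 2 := rfl
  rw [hU0, hU1, hU2] at hmain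
  nlinarith [mul_pos (mul_pos hε hlam) hexz, mul_pos hε hexz,
    mul_le_mul_of_nonneg_left hu0 (le_of_lt (mul_pos (mul_pos hε hlam) hexz))]
end
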